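/- arXiv:2002.05516 — 7 statements merged into one kernel-verified Lean document; each statement's English description precedes it below -/
import Mathlib

section
/- Let each f_i : ℝ^d → ℝ be differentiable, L-smooth and μ-strongly convex with μ > 0. For λ ≥ 0 let x(λ) denote the unique minimizer of F = f + λψ, let x(0) denote the vector whose i-th block is the unique minimizer of f_i, and let x(∞) ∈ ℝ^{nd} have all n blocks equal to the unique minimizer of P(z) = (1/n)·Σ_{i=1}^n f_i(z). Then for every λ > 0 one has ψ(x(λ)) ≤ (f(x(∞)) − f(x(0)))/λ. -/
open scoped BigOperators
open Finset

noncomputable section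

/-- `Vec d` is the Euclidean space `ℝ^d`. -/
abbrev Vec (d : ℕ) := EuclideanSpace ℝ (Fin d)

/-- `Blk n d` is `ℝ^{nd}`, viewed as `n`-tuples of vectors in `ℝ^d`
with the Euclidean norm `‖x‖² = Σᵢ ‖xᵢ‖²`. -/
abbrev Blk (n d : ℕ) := PiLp 2 (fun _ : Fin n => Vec d)

/-- the block average `x̄ = (1/n) Σᵢ xᵢ`. -/
def blkAvg {n d : ℕ} (x : Blk n d) : Vec d := (n : ℝ)⁻¹ • ∑ i, x i

/-- `f(x) = (1/n) Σᵢ fᵢ(xᵢ)`. -/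
def fTot {n d : ℕ} (f : Fin n → Vec d → ℝ) (x : Blk n d) : ℝ :=
  (n : ℝ)⁻¹ * ∑ i, f i (x i)

/-- `ψ(x) = (1/(2n)) Σᵢ ‖xᵢ - x̄‖²`. -/
def psi {n d : ℕ} (x : Blk n d) : ℝ :=
  (2 * n : ℝ)⁻¹ * ∑ i, ‖x i - blkAvg x‖ ^ 2

/-- `F(x) = f(x) + λ ψ(x)`. -/
def FF {n d : ℕ} (f : Fin n → Vec d → ℝ) (lam : ℝ) (x : Blk n d) : ℝ :=
  fTot f x + lam * psi x

/-- the gradient of `f`: its `i`-th block is `(1/n) ∇fᵢ(xᵢ)`, where `g i` is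
the gradient of `fᵢ`. -/
def gradTot {n d : ℕ} (g : Fin n → Vec d → Vec d) (x : Blk n d) : Blk n d :=
  WithLp.toLp 2 (fun i => (n : ℝ)⁻¹ • g i (x i))

/-- the gradient of `ψ`: its `i`-th block is `(1/n) (xᵢ - x̄)`. -/
def gradPsi {n d : ℕ} (x : Blk n d) : Blk n d :=
  WithLp.toLp 2 (fun i => (n : ℝ)⁻¹ • (x i - blkAvg x))

/-- for `λ > 0`, with `xlam` the minimizer of `F = f + λψ`, `x0` the
vector of the individual minimizers of the `fᵢ`, and `x(∞)` the vector whose blocks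
all equal the minimizer `zinf` of `P(z) = (1/n) Σᵢ fᵢ(z)`, one has
`ψ(x(λ)) ≤ (f(x(∞)) − f(x(0)))/λ`. -/
theorem stmt2 (n d : ℕ) (hn : 0 < n) (L μ lam : ℝ) (hμ : 0 < μ) (hlam : 0 < lam)
    (f : Fin n → Vec d → ℝ) (g : Fin n → Vec d → Vec d)
    (hgrad : ∀ i (x : Vec d), HasGradientAt (f i) (g i x) x)
    (hsmooth : ∀ i (x y : Vec d), ‖g i x - g i y‖ ≤ L * ‖x - y‖)
    (hsc : ∀ i, StrongConvexOn Set.univ μ (f i))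
    (xlam : Blk n d) (hxlam : ∀ y : Blk n d, FF f lam xlam ≤ FF f lam y)
    (x0 : Blk n d) (hx0 : ∀ i (z : Vec d), f i (x0 i) ≤ f i z)
    (zinf : Vec d)
    (hzinf : ∀ z : Vec d, (n : ℝ)⁻¹ * ∑ i, f i zinf ≤ (n : ℝ)⁻¹ * ∑ i, f i z) :
    psi xlam ≤ (fTot f (WithLp.toLp 2 (fun _ => zinf) : Blk n d) - fTot f x0) / lam := by
  have havg : blkAvg (WithLp.toLp 2 (fun _ => zinf) : Blk n d) = zinf := by
    simp only [blkAvg, WithLp.ofLp_toLp, Finset.sum_const, Finset.card_univ, Fintype.card_fin]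
    rw [← Nat.cast_smul_eq_nsmul ℝ, smul_smul,
      inv_mul_cancel₀ (Nat.cast_ne_zero.mpr hn.ne' : (n:ℝ) ≠ 0), one_smul]
  have hpsiz : psi (WithLp.toLp 2 (fun _ => zinf) : Blk n d) = 0 := by
    simp [psi, havg]
  have h1 : FF f lam xlam ≤ fTot f (WithLp.toLp 2 (fun _ => zinf) : Blk n d) := by
    have := hxlam (WithLp.toLp 2 (fun _ => zinf) : Blk n d)
    simpa [FF, hpsiz] using this
  have h2 : fTot f x0 ≤ fTot f xlam := by
    unfold fTot
    have : (0:ℝ) ≤ (n:ℝ)⁻¹ := by positivity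
    exact mul_le_mul_of_nonneg_left (Finset.sum_le_sum fun i _ => hx0 i (xlam i)) this
  rw [le_div_iff₀ hlam]
  have : fTot f xlam + lam * psi xlam ≤ fTot f (WithLp.toLp 2 (fun _ => zinf) : Blk n d) := h1
  nlinarith
end
end

section
/- Let each f_i : ℝ^d → ℝ be differentiable, L-smooth and μ-strongly convex with μ > 0. For λ ≥ 0 let x(λ) denote the unique minimizer of F = f + λψ, and let x(∞) ∈ ℝ^{nd} have all n blocks equal to the unique minimizer of P(z) = (1/n)·Σ_{i=1}^n f_i(z). Then the map λ ↦ f(x(λ)) is non-decreasing on [0,∞), and for all λ ≥ 0 one has f(x(λ)) ≤ f(x(∞)). -/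
open scoped BigOperators
open Finset

noncomputable section

lemma psi_nonneg {n d : ℕ} (x : Blk n d) : 0 ≤ psi x := by
  unfold psi
  have : (0:ℝ) ≤ ∑ i, ‖x i - blkAvg x‖ ^ 2 :=
    Finset.sum_nonneg fun i _ => by positivity
  positivity

lemma psi_const {n d : ℕ} (hn : 0 < n) (z : Vec d) :
    psi (WithLp.toLp 2 (fun _ => z) : Blk n d) = 0 := by
  have havg : blkAvg (WithLp.toLp 2 (fun _ => z) : Blk n d) = z := by
    unfold blkAvg
    simp [Finset.sum_const, Finset.card_univ]
    rw [← Nat.cast_smul_eq_nsmul ℝ, smul_smul,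
      inv_mul_cancel₀ (by exact_mod_cast hn.ne' : (n:ℝ) ≠ 0), one_smul]
  unfold psi
  rw [havg]
  simp

lemma blkAvg_half {n d : ℕ} (x y : Blk n d) :
    blkAvg ((1/2 : ℝ) • x + (1/2 : ℝ) • y) =
      (1/2 : ℝ) • blkAvg x + (1/2 : ℝ) • blkAvg y := by
  unfold blkAvg
  simp only [PiLp.add_apply, PiLp.smul_apply, Finset.sum_add_distrib, ← Finset.smul_sum,
    smul_add, smul_smul]
  module

lemma sq_norm_half {E : Type*} [NormedAddCommGroup E] [NormedSpace ℝ E] (a b : E) :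
    ‖(1/2 : ℝ) • a + (1/2 : ℝ) • b‖ ^ 2 ≤ (1/2) * ‖a‖ ^ 2 + (1/2) * ‖b‖ ^ 2 := by
  have h := norm_add_le ((1/2 : ℝ) • a) ((1/2 : ℝ) • b)
  rw [norm_smul, norm_smul] at h
  simp only [Real.norm_eq_abs] at h
  rw [show |(1/2:ℝ)| = 1/2 by norm_num] at h
  have ha := norm_nonneg a
  have hb := norm_nonneg b
  have hn : (0:ℝ) ≤ ‖(1/2 : ℝ) • a + (1/2 : ℝ) • b‖ := norm_nonneg _
  have h2 := pow_le_pow_left₀ hn h 2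
  nlinarith [sq_nonneg (‖a‖ - ‖b‖), h2]

set_option maxHeartbeats 1000000 in
lemma FF_unique {n d : ℕ} (hn : 0 < n) {μ : ℝ} (hμ : 0 < μ)
    (f : Fin n → Vec d → ℝ)
    (hsc : ∀ i, StrongConvexOn Set.univ μ (f i))
    (c : ℝ) (hc : 0 ≤ c) (x y : Blk n d)
    (hx : ∀ w, FF f c x ≤ FF f c w) (hy : ∀ w, FF f c y ≤ FF f c w) :
    x = y := by
  set z : Blk n d := (1/2 : ℝ) • x + (1/2 : ℝ) • y with hz
  have hnz : (0:ℝ) < (n:ℝ)⁻¹ := by positivity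
  -- fTot bound
  have hterm : ∀ i : Fin n, f i (z i) ≤ (1/2) * f i (x i) + (1/2) * f i (y i)
      - (1/2) * (1/2) * (μ / 2 * ‖x i - y i‖ ^ 2) := fun i => by
    have h := (hsc i).2 (Set.mem_univ (x i)) (Set.mem_univ (y i))
      (by norm_num : (0:ℝ) ≤ 1/2) (by norm_num : (0:ℝ) ≤ 1/2) (by norm_num)
    have hzi : z i = (1/2 : ℝ) • x i + (1/2 : ℝ) • y i := rfl
    rw [hzi]
    simpa [smul_eq_mul] using h
  have hf : fTot f z ≤ (1/2) * fTot f x + (1/2) * fTot f y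
      - μ/8 * ((n:ℝ)⁻¹ * ∑ i, ‖x i - y i‖ ^ 2) := by
    unfold fTot
    have hsum : ∑ i, f i (z i) ≤ ∑ i, ((1/2) * f i (x i) + (1/2) * f i (y i)
        - (1/2) * (1/2) * (μ / 2 * ‖x i - y i‖ ^ 2)) :=
      Finset.sum_le_sum fun i _ => hterm i
    rw [Finset.sum_sub_distrib, Finset.sum_add_distrib, ← Finset.mul_sum, ← Finset.mul_sum,
      ← Finset.mul_sum] at hsum
    rw [show ∑ i, μ / 2 * ‖x i - y i‖ ^ 2 = μ / 2 * ∑ i, ‖x i - y i‖ ^ 2 from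
      (Finset.mul_sum _ _ _).symm] at hsum
    have h2 := mul_le_mul_of_nonneg_left hsum (le_of_lt hnz)
    nlinarith [h2]
  -- psi bound
  have hpsi : psi z ≤ (1/2) * psi x + (1/2) * psi y := by
    unfold psi
    have hznd : (0:ℝ) ≤ (2 * n : ℝ)⁻¹ := by positivity
    have hsum : ∑ i, ‖z i - blkAvg z‖ ^ 2 ≤
        ∑ i, ((1/2) * ‖x i - blkAvg x‖ ^ 2 + (1/2) * ‖y i - blkAvg y‖ ^ 2) := by
      refine Finset.sum_le_sum fun i _ => ?_
      have hzi : z i - blkAvg z = (1/2 : ℝ) • (x i - blkAvg x) + (1/2 : ℝ) • (y i - blkAvg y) := by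
        rw [hz, blkAvg_half]
        simp only [PiLp.add_apply, PiLp.smul_apply, smul_sub]
        abel
      rw [hzi]
      exact sq_norm_half _ _
    rw [Finset.sum_add_distrib, ← Finset.mul_sum, ← Finset.mul_sum] at hsum
    nlinarith [mul_le_mul_of_nonneg_left hsum hznd]
  -- combine
  have hFxy : FF f c x = FF f c y := le_antisymm (hx y) (hy x)
  have hFz : FF f c x ≤ FF f c z := hx z
  have hcpsi : c * psi z ≤ c * ((1/2) * psi x + (1/2) * psi y) :=
    mul_le_mul_of_nonneg_left hpsi hc
  have hS : (0:ℝ) ≤ (n:ℝ)⁻¹ * ∑ i, ‖x i - y i‖ ^ 2 := by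
    have : (0:ℝ) ≤ ∑ i, ‖x i - y i‖ ^ 2 := Finset.sum_nonneg fun i _ => by positivity
    positivity
  have hkey : (n:ℝ)⁻¹ * ∑ i, ‖x i - y i‖ ^ 2 ≤ 0 := by
    unfold FF at hFxy hFz
    nlinarith [hf, hcpsi, hFz, hFxy]
  have hsum0 : ∑ i, (‖x i - y i‖ ^ 2) = 0 := by
    have h1 : (0:ℝ) ≤ ∑ i, ‖x i - y i‖ ^ 2 := Finset.sum_nonneg fun i _ => by positivity
    nlinarith [hkey, h1]
  apply PiLp.ext; intro i
  have := (Finset.sum_eq_zero_iff_of_nonneg (fun i _ => by positivity)).1 hsum0 i (Finset.mem_univ i)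
  have : ‖x i - y i‖ = 0 := by nlinarith [norm_nonneg (x i - y i)]
  have := norm_sub_eq_zero_iff.1 this
  exact this

/-- the map `λ ↦ f(x(λ))` is non-decreasing on `[0,∞)`: if `0 ≤ θ ≤ λ`
with `xθ`, `xlam` the respective minimizers of `f + θψ` and `f + λψ`, then
`f(x(θ)) ≤ f(x(λ))`; moreover `f(x(λ)) ≤ f(x(∞))`, where `x(∞)` has all blocks equal
to the minimizer `zinf` of `P(z) = (1/n) Σᵢ fᵢ(z)`. -/
theorem stmt3 (n d : ℕ) (hn : 0 < n) (L μ : ℝ) (hμ : 0 < μ)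
    (f : Fin n → Vec d → ℝ) (g : Fin n → Vec d → Vec d)
    (hgrad : ∀ i (x : Vec d), HasGradientAt (f i) (g i x) x)
    (hsmooth : ∀ i (x y : Vec d), ‖g i x - g i y‖ ≤ L * ‖x - y‖)
    (hsc : ∀ i, StrongConvexOn Set.univ μ (f i))
    (zinf : Vec d)
    (hzinf : ∀ z : Vec d, (n : ℝ)⁻¹ * ∑ i, f i zinf ≤ (n : ℝ)⁻¹ * ∑ i, f i z)
    (θ lam : ℝ) (hθ : 0 ≤ θ) (hθlam : θ ≤ lam)
    (xθ xlam : Blk n d)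
    (hxθ : ∀ y : Blk n d, FF f θ xθ ≤ FF f θ y)
    (hxlam : ∀ y : Blk n d, FF f lam xlam ≤ FF f lam y) :
    fTot f xθ ≤ fTot f xlam ∧ fTot f xlam ≤ fTot f (WithLp.toLp 2 (fun _ => zinf) : Blk n d) := by
  have hlam0 : 0 ≤ lam := hθ.trans hθlam
  constructor
  · rcases eq_or_lt_of_le hθlam with heq | hlt
    · subst heq
      have hxy := FF_unique hn hμ f hsc θ hθ xθ xlam hxθ hxlam
      rw [hxy]
    · have h1 := hxθ xlam
      have h2 := hxlam xθ
      unfold FF at h1 h2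
      have h3 : 0 ≤ (lam - θ) * (psi xθ - psi xlam) := by nlinarith
      have hΔ : 0 ≤ psi xθ - psi xlam := by
        by_contra hneg
        push_neg at hneg
        nlinarith [mul_pos (sub_pos.2 hlt) (neg_pos.2 hneg)]
      nlinarith [mul_nonneg hθ hΔ]
  · have h := hxlam (WithLp.toLp 2 (fun _ => zinf) : Blk n d)
    unfold FF at h
    rw [psi_const hn zinf] at h
    have := mul_nonneg hlam0 (psi_nonneg xlam)
    linarith
end
end

section
/- Let each f_i : ℝ^d → ℝ be differentiable, L-smooth and μ-strongly convex with μ > 0, let λ > 0 and let x(λ) = (x_1(λ),…,x_n(λ)) be the unique minimizer of F = f + λψ, with x̄(λ) = (1/n)·Σ_{i=1}^n x_i(λ). Then for every i = 1,…,n one has x_i(λ) = x̄(λ) − (1/λ)·∇f_i(x_i(λ)). -/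
open scoped BigOperators
open Finset

noncomputable section

open RealInnerProductSpace

/-- for `λ > 0`, the minimizer `x(λ)` of `F = f + λψ` satisfies
`xᵢ(λ) = x̄(λ) − (1/λ) ∇fᵢ(xᵢ(λ))` for every `i`. -/
theorem stmt4 (n d : ℕ) (hn : 0 < n) (L μ lam : ℝ) (hμ : 0 < μ) (hlam : 0 < lam)
    (f : Fin n → Vec d → ℝ) (g : Fin n → Vec d → Vec d)
    (hgrad : ∀ i (x : Vec d), HasGradientAt (f i) (g i x) x)
    (hsmooth : ∀ i (x y : Vec d), ‖g i x - g i y‖ ≤ L * ‖x - y‖)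
    (hsc : ∀ i, StrongConvexOn Set.univ μ (f i))
    (xlam : Blk n d) (hxlam : ∀ y : Blk n d, FF f lam xlam ≤ FF f lam y) :
    ∀ i, xlam i = blkAvg xlam - lam⁻¹ • g i (xlam i) := by
  intro i
  have hn' : (n : ℝ) ≠ 0 := Nat.cast_ne_zero.mpr hn.ne'
  set xb : Vec d := blkAvg xlam with hxb
  have hsuma : ∑ j, (xlam j - xb) = 0 := by
    rw [Finset.sum_sub_distrib, Finset.sum_const, Finset.card_univ, Fintype.card_fin]
    rw [hxb, blkAvg, ← Nat.cast_smul_eq_nsmul ℝ, smul_smul]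
    rw [mul_inv_cancel₀ hn', one_smul, sub_self]
  have key : ∀ v : Vec d, ⟪g i (xlam i) + lam • (xlam i - xb), v⟫ = 0 := by
    intro v
    set e : Blk n d := WithLp.toLp 2 (fun j => if j = i then v else 0) with he
    have hesum : ∑ j, e j = v := by simp [he]
    set a : Fin n → Vec d := fun j => xlam j - xb with ha
    set b : Fin n → Vec d := fun j => e j - (n : ℝ)⁻¹ • v with hb
    set φ : ℝ → ℝ := fun t => FF f lam (xlam + t • e) with hφ
    -- average of perturbed point
    have havg : ∀ t : ℝ, blkAvg (xlam + t • e) = xb + (t * (n : ℝ)⁻¹) • v := by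
      intro t
      rw [blkAvg]
      have : ∑ j, (xlam + t • e) j = (∑ j, xlam j) + t • v := by
        calc ∑ j, (xlam + t • e) j = ∑ j, (xlam j + t • e j) := rfl
          _ = (∑ j, xlam j) + ∑ j, t • e j := Finset.sum_add_distrib
          _ = (∑ j, xlam j) + t • v := by rw [← Finset.smul_sum, hesum]
      rw [this, smul_add, smul_smul, mul_comm ((n : ℝ)⁻¹) t, hxb, blkAvg]
    -- explicit form of φ
    have hφeq : φ = fun t => (n : ℝ)⁻¹ * ∑ j, f j (xlam j + t • e j)
        + lam * ((2 * n : ℝ)⁻¹ * ((∑ j, ‖a j‖ ^ 2)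
          + (2 * ∑ j, ⟪a j, b j⟫) * t + (∑ j, ‖b j‖ ^ 2) * t ^ 2)) := by
      funext t
      show fTot f (xlam + t • e) + lam * psi (xlam + t • e) = _
      unfold fTot psi
      rw [havg t]
      have hterm : ∀ j, (xlam + t • e) j - (xb + (t * (n : ℝ)⁻¹) • v)
          = a j + t • b j := by
        intro j
        show xlam j + t • e j - (xb + (t * (n : ℝ)⁻¹) • v) = a j + t • b j
        rw [ha, hb]
        simp only [smul_sub, smul_smul]
        abel
      have hsumeq : ∑ j, ‖(xlam + t • e) j - (xb + (t * (n : ℝ)⁻¹) • v)‖ ^ 2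
          = (∑ j, ‖a j‖ ^ 2) + (2 * ∑ j, ⟪a j, b j⟫) * t
            + (∑ j, ‖b j‖ ^ 2) * t ^ 2 := by
        have step1 : ∑ j, ‖(xlam + t • e) j - (xb + (t * (n : ℝ)⁻¹) • v)‖ ^ 2
            = ∑ j, (‖a j‖ ^ 2 + 2 * ⟪a j, b j⟫ * t + ‖b j‖ ^ 2 * t ^ 2) := by
          refine Finset.sum_congr rfl fun j _ => ?_
          rw [hterm j, norm_add_sq_real, real_inner_smul_right, norm_smul]
          simp only [Real.norm_eq_abs, mul_pow, sq_abs]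
          ring
        rw [step1, Finset.sum_add_distrib, Finset.sum_add_distrib, ← Finset.sum_mul,
          ← Finset.sum_mul, Finset.mul_sum]
      rw [hsumeq]
      rfl
    -- derivative of φ at 0
    have hD : HasDerivAt φ
        ((n : ℝ)⁻¹ * ∑ j, ⟪g j (xlam j), e j⟫
          + lam * ((2 * n : ℝ)⁻¹ * (2 * ∑ j, ⟪a j, b j⟫))) 0 := by
      rw [hφeq]
      have h1 : HasDerivAt (fun t : ℝ => ∑ j, f j (xlam j + t • e j))
          (∑ j, ⟪g j (xlam j), e j⟫) 0 := by
        refine HasDerivAt.fun_sum fun j _ => ?_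
        have hline : HasDerivAt (fun t : ℝ => xlam j + t • e j) (e j) 0 := by
          simpa using ((hasDerivAt_id (0:ℝ)).smul_const (e j)).const_add (xlam j)
        have h2 := (hgrad j (xlam j)).hasFDerivAt
        have h3 : HasFDerivAt (f j) (InnerProductSpace.toDual ℝ _ (g j (xlam j)))
            (xlam j + (0:ℝ) • e j) := by simpa using h2
        have := h3.comp_hasDerivAt 0 hline
        simpa [InnerProductSpace.toDual_apply_apply, Function.comp_def] using this
      have h2 : HasDerivAt (fun t : ℝ => (∑ j, ‖a j‖ ^ 2)
          + (2 * ∑ j, ⟪a j, b j⟫) * t + (∑ j, ‖b j‖ ^ 2) * t ^ 2)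
          (2 * ∑ j, ⟪a j, b j⟫) 0 := by
        have hq : HasDerivAt (fun t : ℝ => (∑ j, ‖b j‖ ^ 2) * t ^ 2) 0 0 := by
          simpa using ((hasDerivAt_pow 2 (0:ℝ)).const_mul (∑ j, ‖b j‖ ^ 2))
        have hl : HasDerivAt (fun t : ℝ => (2 * ∑ j, ⟪a j, b j⟫) * t)
            (2 * ∑ j, ⟪a j, b j⟫) 0 := by
          simpa using (hasDerivAt_id (0:ℝ)).const_mul (2 * ∑ j, ⟪a j, b j⟫)
        simpa [Pi.add_def] using ((hl.const_add (∑ j, ‖a j‖ ^ 2)).add hq)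
      exact (h1.const_mul ((n : ℝ)⁻¹)).add ((h2.const_mul ((2 * n : ℝ)⁻¹)).const_mul lam)
    -- local min at 0
    have hmin : IsLocalMin φ 0 := by
      refine Filter.Eventually.of_forall fun t => ?_
      have : φ 0 = FF f lam xlam := by rw [hφ]; simp
      rw [this]; exact hxlam _
    have hzero := hmin.deriv_eq_zero
    rw [hD.deriv] at hzero
    -- simplify the two sums
    have hs1 : ∑ j, ⟪g j (xlam j), e j⟫ = ⟪g i (xlam i), v⟫ := by
      rw [he]
      rw [Finset.sum_eq_single i]
      · simp
      · intro j _ hj; simp [hj]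
      · simp
    have hs2 : ∑ j, ⟪a j, b j⟫ = ⟪a i, v⟫ := by
      have : ∀ j, ⟪a j, b j⟫ = ⟪a j, e j⟫ - (n : ℝ)⁻¹ * ⟪a j, v⟫ := by
        intro j; rw [hb]; rw [inner_sub_right, real_inner_smul_right]
      simp_rw [this]
      rw [Finset.sum_sub_distrib, ← Finset.mul_sum, ← sum_inner]
      rw [hsuma]
      simp only [inner_zero_left, mul_zero, sub_zero]
      rw [he, Finset.sum_eq_single i]
      · simp
      · intro j _ hj; simp [hj]
      · simp
    rw [hs1, hs2] at hzero
    -- conclude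
    rw [inner_add_left, real_inner_smul_left]
    have h2n : (2 * (n : ℝ))⁻¹ * (2 * ⟪a i, v⟫) = (n : ℝ)⁻¹ * ⟪a i, v⟫ := by
      field_simp
    rw [h2n] at hzero
    have : (n : ℝ)⁻¹ * (⟪g i (xlam i), v⟫ + lam * ⟪a i, v⟫) = 0 := by
      rw [mul_add]; linarith [hzero]
    have h4 := (mul_eq_zero.mp this).resolve_left (inv_ne_zero hn')
    rw [ha] at h4
    exact h4
  have hw : g i (xlam i) + lam • (xlam i - xb) = 0 := by
    have := key (g i (xlam i) + lam • (xlam i - xb))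
    rwa [inner_self_eq_zero] at this
  set w : Vec d := g i (xlam i) with hwdef
  have h5 : lam • (xlam i - xb) = -w := by
    rw [eq_neg_iff_add_eq_zero, add_comm]; exact hw
  have h6 : xlam i - xb = -(lam⁻¹ • w) := by
    rw [← smul_neg, ← h5, smul_smul, inv_mul_cancel₀ hlam.ne', one_smul]
  rw [sub_eq_iff_eq_add] at h6
  rw [h6]
  abel
end
end

section
/- Let each f_i : ℝ^d → ℝ be differentiable, L-smooth and μ-strongly convex with μ > 0, and let λ > 0. Let x(λ) be the unique minimizer of F = f + λψ with block average x̄(λ), let x(0) be the vector of the individual minimizers of the f_i, let P(z) = (1/n)·Σ_{i=1}^n f_i(z), and let x(∞) have all blocks equal to the unique minimizer of P. Then ‖∇P(x̄(λ))‖² ≤ (2L²/λ)·(f(x(∞)) − f(x(0))). -/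
open scoped BigOperators
open Finset
open scoped RealInnerProductSpace

noncomputable section

/-- for `λ > 0`, with `xlam` the minimizer of `F = f + λψ`, `x0` the
vector of individual minimizers of the `fᵢ`, and `zinf` the minimizer of
`P(z) = (1/n) Σᵢ fᵢ(z)` (whose gradient at `z` is `(1/n) Σᵢ ∇fᵢ(z)`), one has
`‖∇P(x̄(λ))‖² ≤ (2L²/λ)(f(x(∞)) − f(x(0)))`. -/
theorem stmt6 (n d : ℕ) (hn : 0 < n) (L μ lam : ℝ) (hμ : 0 < μ) (hlam : 0 < lam)
    (f : Fin n → Vec d → ℝ) (g : Fin n → Vec d → Vec d)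
    (hgrad : ∀ i (x : Vec d), HasGradientAt (f i) (g i x) x)
    (hsmooth : ∀ i (x y : Vec d), ‖g i x - g i y‖ ≤ L * ‖x - y‖)
    (hsc : ∀ i, StrongConvexOn Set.univ μ (f i))
    (xlam : Blk n d) (hxlam : ∀ y : Blk n d, FF f lam xlam ≤ FF f lam y)
    (x0 : Blk n d) (hx0 : ∀ i (z : Vec d), f i (x0 i) ≤ f i z)
    (zinf : Vec d)
    (hzinf : ∀ z : Vec d, (n : ℝ)⁻¹ * ∑ i, f i zinf ≤ (n : ℝ)⁻¹ * ∑ i, f i z) :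
    ‖(n : ℝ)⁻¹ • ∑ i, g i (blkAvg xlam)‖ ^ 2 ≤
      (2 * L ^ 2 / lam) * (fTot f (WithLp.toLp 2 (fun _ => zinf) : Blk n d) - fTot f x0) := by
  classical
  have hn' : (n : ℝ) ≠ 0 := Nat.cast_ne_zero.mpr hn.ne'
  have hnpos : (0:ℝ) < n := Nat.cast_pos.mpr hn
  set m := blkAvg xlam with hm
  set P : Fin n → (Blk n d →L[ℝ] Vec d) :=
    fun i => PiLp.proj (𝕜 := ℝ) 2 (fun _ : Fin n => Vec d) i with hPdef
  set A : Fin n → (Blk n d →L[ℝ] Vec d) :=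
    fun i => P i - (n : ℝ)⁻¹ • ∑ j, P j with hAdef
  have hAapp : ∀ (i : Fin n) (y : Blk n d), A i y = y i - blkAvg y := by
    intro i y
    simp [hAdef, hPdef, blkAvg, ContinuousLinearMap.sub_apply,
      ContinuousLinearMap.smul_apply, ContinuousLinearMap.sum_apply]
  -- derivative of fTot
  set Df : Blk n d →L[ℝ] ℝ :=
    (n : ℝ)⁻¹ • ∑ i, (InnerProductSpace.toDual ℝ (Vec d) (g i (xlam i))).comp (P i) with hDfdef
  have hDf : HasFDerivAt (fTot f) Df xlam := by
    have hs : HasFDerivAt (fun y : Blk n d => ∑ i, f i (y i))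
        (∑ i, (InnerProductSpace.toDual ℝ (Vec d) (g i (xlam i))).comp (P i)) xlam := by
      apply HasFDerivAt.fun_sum
      intro i _
      exact (hgrad i (xlam i)).hasFDerivAt.comp xlam ((P i).hasFDerivAt)
    exact hs.const_mul ((n : ℝ)⁻¹)
  -- derivative of psi
  set Dψ : Blk n d →L[ℝ] ℝ :=
    (2 * n : ℝ)⁻¹ • ∑ i, (2 • (innerSL ℝ (A i xlam)).comp (A i)) with hDψdef
  have hpsi_eq : (psi : Blk n d → ℝ) = fun y => (2 * n : ℝ)⁻¹ * ∑ i, ‖A i y‖ ^ 2 := by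
    funext y
    simp only [psi, hAapp]
  have hDψ : HasFDerivAt (psi : Blk n d → ℝ) Dψ xlam := by
    rw [hpsi_eq]
    exact (HasFDerivAt.fun_sum (fun i _ => ((A i).hasFDerivAt (x := xlam)).norm_sq)).const_mul _
  have hDF : HasFDerivAt (FF f lam) (Df + lam • Dψ) xlam :=
    hDf.add (hDψ.const_mul lam)
  have hmin : IsLocalMin (FF f lam) xlam := Filter.Eventually.of_forall hxlam
  have hD0 : Df + lam • Dψ = 0 := hmin.hasFDerivAt_eq_zero hDF
  -- sum of deviations is zero
  have hsum0 : ∑ i, (xlam i - m) = 0 := by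
    have : (n : ℝ) • m = ∑ i, xlam i := by
      rw [hm]; simp [blkAvg, smul_smul, mul_inv_cancel₀ hn']
    rw [Finset.sum_sub_distrib]
    simp [Finset.sum_const, Finset.card_univ, ← this, ← Nat.cast_smul_eq_nsmul ℝ]
  -- evaluate the derivative on any direction
  have hEval : ∀ h : Blk n d,
      (n : ℝ)⁻¹ * ∑ i, ⟪g i (xlam i) + lam • (xlam i - m), h i⟫ = 0 := by
    intro h
    have h0 := DFunLike.congr_fun hD0 h
    have hswap : ∑ i, ⟪xlam i - m, A i h⟫ = ∑ i, ⟪xlam i - m, h i⟫ := by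
      have : ∀ i : Fin n, ⟪xlam i - m, A i h⟫
          = ⟪xlam i - m, h i⟫ - ⟪xlam i - m, blkAvg h⟫ := by
        intro i; rw [hAapp, inner_sub_right]
      rw [Finset.sum_congr rfl fun i _ => this i, Finset.sum_sub_distrib,
        ← _root_.sum_inner, hsum0, inner_zero_left, sub_zero]
    simp only [ContinuousLinearMap.add_apply, ContinuousLinearMap.smul_apply,
      ContinuousLinearMap.zero_apply, hDfdef, hDψdef, ContinuousLinearMap.sum_apply,
      ContinuousLinearMap.comp_apply, InnerProductSpace.toDual_apply_apply, innerSL_apply_apply,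
      smul_eq_mul] at h0
    have hAx : ∀ i : Fin n, A i xlam = xlam i - m := fun i => by rw [hAapp]
    simp only [hPdef, PiLp.proj_apply, hAx, nsmul_eq_mul, Nat.cast_ofNat,
      ← Finset.mul_sum] at h0
    rw [hswap] at h0
    simp only [inner_add_left, real_inner_smul_left, Finset.sum_add_distrib]
    rw [← Finset.mul_sum]
    linear_combination h0
  -- first-order conditions per block
  have hkey : ∀ i, g i (xlam i) + lam • (xlam i - m) = 0 := by
    set w : Fin n → Vec d := fun i => g i (xlam i) + lam • (xlam i - m) with hw
    have h0 := hEval (WithLp.toLp 2 w : Blk n d)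
    have hsum : ∑ i, ⟪w i, w i⟫ = 0 := by
      rcases mul_eq_zero.mp h0 with h | h
      · exact absurd h (by simpa using hn')
      · exact h
    intro i
    have h1 : ⟪w i, w i⟫ = 0 :=
      (Finset.sum_eq_zero_iff_of_nonneg
        (fun j _ => real_inner_self_nonneg)).mp hsum i (mem_univ i)
    exact inner_self_eq_zero.mp h1
  have hgsum : ∑ i, g i (xlam i) = 0 := by
    have : ∀ i : Fin n, g i (xlam i) = -(lam • (xlam i - m)) :=
      fun i => eq_neg_of_add_eq_zero_left (hkey i)
    rw [Finset.sum_congr rfl fun i _ => this i]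
    simp [← Finset.smul_sum, hsum0]
  -- the residual vectors
  set v : Fin n → Vec d := fun i => g i m - g i (xlam i) with hv
  have hveq : ∑ i, v i = ∑ i, g i m := by
    rw [hv]; rw [Finset.sum_sub_distrib, hgsum, sub_zero]
  set S : ℝ := ∑ i, ‖xlam i - m‖ ^ 2 with hS
  set Sv : ℝ := ∑ i, ‖v i‖ ^ 2 with hSv
  have hSnn : 0 ≤ S := Finset.sum_nonneg fun i _ => by positivity
  have hSvnn : 0 ≤ Sv := Finset.sum_nonneg fun i _ => by positivity
  have hY : ‖∑ i, v i‖ ^ 2 ≤ (n : ℝ) * Sv := by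
    calc ‖∑ i, v i‖ ^ 2 ≤ (∑ i, ‖v i‖) ^ 2 := by
          apply pow_le_pow_left₀ (norm_nonneg _) (norm_sum_le _ _)
      _ ≤ (n : ℝ) * Sv := by
          simpa [card_univ] using
            sq_sum_le_card_mul_sum_sq (s := (univ : Finset (Fin n))) (f := fun i => ‖v i‖)
  have hSvS : Sv ≤ L ^ 2 * S := by
    rw [hSv, hS, Finset.mul_sum]
    apply Finset.sum_le_sum
    intro i _
    have h1 : ‖v i‖ ≤ L * ‖m - xlam i‖ := hsmooth i m (xlam i)
    calc ‖v i‖ ^ 2 ≤ (L * ‖m - xlam i‖) ^ 2 := pow_le_pow_left₀ (norm_nonneg _) h1 2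
      _ = L ^ 2 * ‖xlam i - m‖ ^ 2 := by rw [mul_pow, norm_sub_rev]
  -- psi bound from minimality
  set Δ : ℝ := fTot f (WithLp.toLp 2 (fun _ => zinf) : Blk n d) - fTot f x0 with hΔ
  have hpsival : psi xlam = (2 * n : ℝ)⁻¹ * S := rfl
  have hpsile : lam * ((2 * n : ℝ)⁻¹ * S) ≤ Δ := by
    have h1 := hxlam (WithLp.toLp 2 (fun _ => zinf))
    have havg : blkAvg (WithLp.toLp 2 (fun _ => zinf) : Blk n d) = zinf := by
      simp [blkAvg, Finset.sum_const, card_univ, ← Nat.cast_smul_eq_nsmul ℝ,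
        smul_smul, inv_mul_cancel₀ hn']
    have h2 : psi (WithLp.toLp 2 (fun _ => zinf) : Blk n d) = 0 := by
      simp [psi, havg]
    have h3 : fTot f x0 ≤ fTot f xlam := by
      unfold fTot
      apply mul_le_mul_of_nonneg_left _ (by positivity)
      exact Finset.sum_le_sum fun i _ => hx0 i (xlam i)
    unfold FF at h1
    rw [h2, hpsival] at h1
    rw [hΔ]
    linarith
  -- final chain
  have hLHS : ‖(n : ℝ)⁻¹ • ∑ i, g i (blkAvg xlam)‖ ^ 2
      = ((n : ℝ)⁻¹) ^ 2 * ‖∑ i, v i‖ ^ 2 := by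
    rw [← hm, ← hveq, norm_smul]
    rw [Real.norm_eq_abs, abs_of_pos (by positivity), mul_pow]
  rw [hLHS]
  have hgoal : ((n : ℝ)⁻¹) ^ 2 * ‖∑ i, v i‖ ^ 2 ≤ (2 * L ^ 2 / lam) * Δ := by
    have hstep1 : ((n : ℝ)⁻¹) ^ 2 * ‖∑ i, v i‖ ^ 2 ≤ (n : ℝ)⁻¹ * Sv := by
      have := mul_le_mul_of_nonneg_left hY (le_of_lt (by positivity : (0:ℝ) < ((n:ℝ)⁻¹)^2))
      calc ((n : ℝ)⁻¹) ^ 2 * ‖∑ i, v i‖ ^ 2 ≤ ((n : ℝ)⁻¹) ^ 2 * ((n : ℝ) * Sv) := this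
        _ = (n : ℝ)⁻¹ * Sv := by field_simp
    have hstep2 : (n : ℝ)⁻¹ * Sv ≤ (n : ℝ)⁻¹ * (L ^ 2 * S) :=
      mul_le_mul_of_nonneg_left hSvS (by positivity)
    have hstep3 : (n : ℝ)⁻¹ * (L ^ 2 * S) ≤ (2 * L ^ 2 / lam) * Δ := by
      have h4 : 2 * L ^ 2 / lam * (lam * ((2 * n : ℝ)⁻¹ * S)) ≤ 2 * L ^ 2 / lam * Δ :=
        mul_le_mul_of_nonneg_left hpsile (by positivity)
      have h5 : 2 * L ^ 2 / lam * (lam * ((2 * n : ℝ)⁻¹ * S)) = (n : ℝ)⁻¹ * (L ^ 2 * S) := by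
        field_simp
      linarith
    linarith
  exact hgoal
end
end

section
/- Let each f_i : ℝ^d → ℝ be differentiable, convex and L-smooth, let λ ≥ 0, 0 < p < 1, F = f + λψ, and let x* ∈ ℝ^{nd} be the minimizer of F (so ∇F(x*) = 0). Set 𝓛 = (1/n)·max{L/(1−p), λ/p}. Then for every x ∈ ℝ^{nd}: (1/(1−p))·‖∇f(x) − ∇f(x*)‖² + (λ²/p)·‖∇ψ(x) − ∇ψ(x*)‖² ≤ 2𝓛·(F(x) − F(x*)). -/
open scoped BigOperators RealInnerProductSpace
open Finset

noncomputable section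

section helpers
variable {E : Type*} [NormedAddCommGroup E] [InnerProductSpace ℝ E] [CompleteSpace E]

lemma line_hasDerivAt (h : E → ℝ) (x v : E) (t : ℝ) (G : E → E)
    (hg : HasGradientAt h (G (x + t • v)) (x + t • v)) :
    HasDerivAt (fun s : ℝ => h (x + s • v)) ⟪G (x + t • v), v⟫ t := by
  have hline : HasDerivAt (fun s : ℝ => x + s • v) v t := by
    simpa using ((hasDerivAt_id t).smul_const v).const_add x
  have hF := (hasGradientAt_iff_hasFDerivAt.1 hg).comp_hasDerivAt t hline
  simpa [InnerProductSpace.toDual_apply_apply, Function.comp_def] using hF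

lemma convex_grad_lower (h : E → ℝ) (g : E → E)
    (hg : ∀ z, HasGradientAt h (g z) z)
    (hc : ConvexOn ℝ Set.univ h) (x y : E) :
    h y + ⟪g y, x - y⟫ ≤ h x := by
  set v := x - y with hv
  have hder : HasDerivAt (fun s : ℝ => h (y + s • v)) ⟪g y, v⟫ 0 := by
    have := line_hasDerivAt h y v 0 g (by simpa using hg y)
    simpa using this
  have htend : Filter.Tendsto (fun t : ℝ => (h (y + t • v) - h y) / t)
      (nhdsWithin 0 (Set.Ioi 0)) (nhds ⟪g y, v⟫) := by
    have h1 := hasDerivAt_iff_tendsto_slope.1 hder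
    have h2 : nhdsWithin (0:ℝ) (Set.Ioi 0) ≤ nhdsWithin 0 {(0:ℝ)}ᶜ :=
      nhdsWithin_mono _ (fun t ht => ne_of_gt ht)
    have := h1.mono_left h2
    refine this.congr fun t => ?_
    simp [slope_def_field, div_eq_inv_mul]
  have hbound : ∀ᶠ t in nhdsWithin (0:ℝ) (Set.Ioi 0),
      (h (y + t • v) - h y) / t ≤ h x - h y := by
    filter_upwards [Ioo_mem_nhdsGT_of_mem (by norm_num : (0:ℝ) ∈ Set.Ico 0 1)]
      with t ht
    have hcomb := hc.2 (Set.mem_univ y) (Set.mem_univ x)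
      (by linarith [ht.2] : (0:ℝ) ≤ 1 - t) (le_of_lt ht.1) (by ring)
    have hyx : (1 - t) • y + t • x = y + t • v := by
      rw [hv]; module
    rw [hyx] at hcomb
    simp only [smul_eq_mul] at hcomb
    rw [div_le_iff₀ ht.1]
    nlinarith [ht.1]
  have := le_of_tendsto htend hbound
  linarith

lemma descent_lemma (h : E → ℝ) (g : E → E)
    (hg : ∀ z, HasGradientAt h (g z) z)
    (L : ℝ) (hL : 0 ≤ L) (hlip : ∀ a b, ‖g a - g b‖ ≤ L * ‖a - b‖) (x y : E) :
    h y ≤ h x + ⟪g x, y - x⟫ + L / 2 * ‖y - x‖ ^ 2 := by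
  set v := y - x with hv
  have hcontg : Continuous g := by
    have : LipschitzWith ⟨L, hL⟩ g :=
      LipschitzWith.of_dist_le_mul (by intro a b; rw [dist_eq_norm, dist_eq_norm]; exact hlip a b)
    exact this.continuous
  have hcont1 : Continuous fun t : ℝ => (⟪g (x + t • v), v⟫ : ℝ) := by
    exact (hcontg.comp (by continuity)).inner continuous_const
  have hderiv : ∀ t ∈ Set.uIcc (0:ℝ) 1,
      HasDerivAt (fun s => h (x + s • v)) ⟪g (x + t • v), v⟫ t := fun t _ =>
    line_hasDerivAt h x v t g (hg _)
  have hint : IntervalIntegrable (fun t : ℝ => (⟪g (x + t • v), v⟫ : ℝ))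
      MeasureTheory.volume 0 1 := hcont1.intervalIntegrable _ _
  have heq : h (x + (1:ℝ) • v) - h (x + (0:ℝ) • v)
      = ∫ t in (0:ℝ)..1, ⟪g (x + t • v), v⟫ :=
    (intervalIntegral.integral_eq_sub_of_hasDerivAt hderiv hint).symm
  have hint2 : IntervalIntegrable (fun t : ℝ => ⟪g x, v⟫ + L * t * ‖v‖^2)
      MeasureTheory.volume 0 1 := by
    apply Continuous.intervalIntegrable; continuity
  have hb : (∫ t in (0:ℝ)..1, ⟪g (x + t • v), v⟫)
      ≤ ∫ t in (0:ℝ)..1, (⟪g x, v⟫ + L * t * ‖v‖^2) := by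
    apply intervalIntegral.integral_mono_on (by norm_num) hint hint2
    intro t ht
    have h1 : (⟪g (x + t • v), v⟫ : ℝ) - ⟪g x, v⟫ = ⟪g (x + t • v) - g x, v⟫ := by
      rw [inner_sub_left]
    have h2 : (⟪g (x + t • v) - g x, v⟫ : ℝ) ≤ ‖g (x + t • v) - g x‖ * ‖v‖ :=
      real_inner_le_norm _ _
    have h3 : ‖g (x + t • v) - g x‖ ≤ L * (t * ‖v‖) := by
      have := hlip (x + t • v) x
      simpa [norm_smul, abs_of_nonneg ht.1, mul_assoc] using this
    nlinarith [norm_nonneg v, ht.1, norm_nonneg (g (x + t • v) - g x)]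
  have hI : (∫ t in (0:ℝ)..1, (⟪g x, v⟫ + L * t * ‖v‖^2))
      = ⟪g x, v⟫ + L / 2 * ‖v‖ ^ 2 := by
    rw [intervalIntegral.integral_add (by apply Continuous.intervalIntegrable; continuity)
      (by apply Continuous.intervalIntegrable; continuity)]
    have : (fun t : ℝ => L * t * ‖v‖^2) = fun t : ℝ => (L * ‖v‖^2) * t := by
      funext t; ring
    rw [this, intervalIntegral.integral_const_mul, integral_id]
    simp; ring
  have h0 : x + (0:ℝ) • v = x := by simp
  have h1 : x + (1:ℝ) • v = y := by rw [hv]; simp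
  rw [h0, h1] at heq
  rw [hI] at hb
  linarith [heq, hb]

lemma cocoercivity (h : E → ℝ) (g : E → E)
    (hg : ∀ z, HasGradientAt h (g z) z)
    (hc : ConvexOn ℝ Set.univ h)
    (L : ℝ) (hL : 0 ≤ L) (hlip : ∀ a b, ‖g a - g b‖ ≤ L * ‖a - b‖) (x y : E) :
    ‖g x - g y‖ ^ 2 ≤ 2 * L * (h x - h y - ⟪g y, x - y⟫) := by
  rcases eq_or_lt_of_le hL with hL0 | hLpos
  · have hx0 : ‖g x - g y‖ ≤ 0 := by
      have := hlip x y; rw [← hL0] at this; simpa using this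
    have : ‖g x - g y‖ = 0 := le_antisymm hx0 (norm_nonneg _)
    rw [← hL0, this]
    norm_num
  · set w := g x - g y with hw
    set z := x - L⁻¹ • w with hzdef
    have h1 : h y + ⟪g y, z - y⟫ ≤ h z := convex_grad_lower h g hg hc z y
    have h2 : h z ≤ h x + ⟪g x, z - x⟫ + L / 2 * ‖z - x‖ ^ 2 :=
      descent_lemma h g hg L hL hlip x z
    have hzx : z - x = -(L⁻¹ • w) := by rw [hzdef]; abel
    have e1 : (⟪g x, z - x⟫ : ℝ) = -(L⁻¹ * ⟪g x, w⟫) := by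
      rw [hzx, inner_neg_right, real_inner_smul_right]
    have e2 : ‖z - x‖ ^ 2 = L⁻¹ ^ 2 * ‖w‖ ^ 2 := by
      rw [hzx, norm_neg, norm_smul]
      rw [mul_pow]
      congr 1
      rw [Real.norm_eq_abs, sq_abs]
    have e3 : (⟪g y, z - y⟫ : ℝ) = ⟪g y, x - y⟫ - L⁻¹ * ⟪g y, w⟫ := by
      have : z - y = (x - y) - L⁻¹ • w := by rw [hzdef]; abel
      rw [this, inner_sub_right, real_inner_smul_right]
    have e4 : (⟪g x, w⟫ : ℝ) - ⟪g y, w⟫ = ‖w‖ ^ 2 := by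
      rw [← inner_sub_left, ← hw, real_inner_self_eq_norm_sq]
    have hLne : L ≠ 0 := ne_of_gt hLpos
    have hinv : L * L⁻¹ = 1 := mul_inv_cancel₀ hLne
    rw [e1, e2] at h2
    rw [e3] at h1
    have e5 : L⁻¹ * ⟪g x, w⟫ - L⁻¹ * ⟪g y, w⟫ = L⁻¹ * ‖w‖ ^ 2 := by
      rw [← mul_sub, e4]
    have hco : L / 2 * (L⁻¹ ^ 2 * ‖w‖ ^ 2) = L⁻¹ * ‖w‖ ^ 2 / 2 := by
      field_simp
    rw [hco] at h2
    have key : L⁻¹ * ‖w‖ ^ 2 / 2 ≤ h x - h y - ⟪g y, x - y⟫ := by linarith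
    have final := mul_le_mul_of_nonneg_left key (by positivity : (0:ℝ) ≤ 2 * L)
    calc ‖w‖ ^ 2 = 2 * L * (L⁻¹ * ‖w‖ ^ 2 / 2) := by
            field_simp
          _ ≤ 2 * L * (h x - h y - ⟪g y, x - y⟫) := final

end helpers

set_option maxHeartbeats 1000000

/-- expected smoothness: if each `fᵢ` is differentiable, convex and
`L`-smooth, `λ ≥ 0`, `0 < p < 1`, `x*` minimizes `F = f + λψ`, and
`𝓛 = (1/n) max{L/(1−p), λ/p}`, then for all `x`:
`(1/(1−p))‖∇f(x) − ∇f(x*)‖² + (λ²/p)‖∇ψ(x) − ∇ψ(x*)‖² ≤ 2𝓛(F(x) − F(x*))`. -/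
theorem stmt12 (n d : ℕ) (hn : 0 < n) (L lam p : ℝ)
    (hlam : 0 ≤ lam) (hp0 : 0 < p) (hp1 : p < 1)
    (f : Fin n → Vec d → ℝ) (g : Fin n → Vec d → Vec d)
    (hgrad : ∀ i (x : Vec d), HasGradientAt (f i) (g i x) x)
    (hconv : ∀ i, ConvexOn ℝ Set.univ (f i))
    (hsmooth : ∀ i (x y : Vec d), ‖g i x - g i y‖ ≤ L * ‖x - y‖)
    (xstar : Blk n d) (hxstar : ∀ y : Blk n d, FF f lam xstar ≤ FF f lam y) :
    ∀ x : Blk n d,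
      (1 / (1 - p)) * ‖gradTot g x - gradTot g xstar‖ ^ 2 +
          (lam ^ 2 / p) * ‖gradPsi x - gradPsi xstar‖ ^ 2 ≤
        2 * ((n : ℝ)⁻¹ * max (L / (1 - p)) (lam / p)) *
          (FF f lam x - FF f lam xstar) := by
  intro x
  classical
  have hnR : (0:ℝ) < n := by exact_mod_cast hn
  have hnne : (n:ℝ) ≠ 0 := ne_of_gt hnR
  have h1p : (0:ℝ) < 1 - p := by linarith
  set L0 : ℝ := max L 0 with hL0def
  have hL0 : 0 ≤ L0 := le_max_right _ _
  have hsmooth0 : ∀ i (a b : Vec d), ‖g i a - g i b‖ ≤ L0 * ‖a - b‖ := fun i a b =>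
    (hsmooth i a b).trans (mul_le_mul_of_nonneg_right (le_max_left _ _) (norm_nonneg _))
  set M : ℝ := max (L / (1 - p)) (lam / p) with hMdef
  have hM2 : lam / p ≤ M := le_max_right _ _
  have hM1 : L0 / (1 - p) ≤ M := by
    rcases le_total L 0 with hL | hL
    · rw [hL0def, max_eq_right hL]
      simpa using le_trans (div_nonneg hlam hp0.le) hM2
    · rw [hL0def, max_eq_left hL]; exact le_max_left _ _
  set v : Blk n d := x - xstar with hvdef
  have hvi : ∀ i, v i = x i - xstar i := fun i => by rw [hvdef, PiLp.sub_apply]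
  -- sum of centered xstar blocks is zero
  have hsumb : ∑ i, (xstar i - blkAvg xstar) = 0 := by
    rw [Finset.sum_sub_distrib, Finset.sum_const, Finset.card_univ, Fintype.card_fin,
      blkAvg, ← Nat.cast_smul_eq_nsmul ℝ, smul_smul, mul_inv_cancel₀ hnne, one_smul,
      sub_self]
  -- norm identities
  set SA : ℝ := ∑ i, ‖g i (x i) - g i (xstar i)‖ ^ 2 with hSAdef
  set SC : ℝ := ∑ i, ‖(x i - blkAvg x) - (xstar i - blkAvg xstar)‖ ^ 2 with hSCdef
  have EN1 : ‖gradTot g x - gradTot g xstar‖ ^ 2 = (n:ℝ)⁻¹ ^ 2 * SA := by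
    rw [PiLp.norm_sq_eq_of_L2, hSAdef, Finset.mul_sum]
    refine Finset.sum_congr rfl fun i _ => ?_
    have h1 : (gradTot g x - gradTot g xstar) i
        = (n:ℝ)⁻¹ • (g i (x i) - g i (xstar i)) := by
      rw [PiLp.sub_apply, gradTot, gradTot, PiLp.toLp_apply, PiLp.toLp_apply, ← smul_sub]
    rw [h1, norm_smul, Real.norm_eq_abs, mul_pow, sq_abs]
  have EN2 : ‖gradPsi x - gradPsi xstar‖ ^ 2 = (n:ℝ)⁻¹ ^ 2 * SC := by
    rw [PiLp.norm_sq_eq_of_L2, hSCdef, Finset.mul_sum]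
    refine Finset.sum_congr rfl fun i _ => ?_
    have h1 : (gradPsi x - gradPsi xstar) i
        = (n:ℝ)⁻¹ • ((x i - blkAvg x) - (xstar i - blkAvg xstar)) := by
      rw [PiLp.sub_apply, gradPsi, gradPsi, PiLp.toLp_apply, PiLp.toLp_apply, ← smul_sub]
    rw [h1, norm_smul, Real.norm_eq_abs, mul_pow, sq_abs]
  -- Bregman of f
  set SB : ℝ := ∑ i, (f i (x i) - f i (xstar i) - ⟪g i (xstar i), x i - xstar i⟫) with hSBdef
  have hSBnn : 0 ≤ SB := by
    rw [hSBdef]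
    refine Finset.sum_nonneg fun i _ => ?_
    have := convex_grad_lower (f i) (g i) (hgrad i) (hconv i) (x i) (xstar i)
    linarith
  have hSA : SA ≤ 2 * L0 * SB := by
    rw [hSAdef, hSBdef, Finset.mul_sum]
    refine Finset.sum_le_sum fun i _ => ?_
    exact cocoercivity (f i) (g i) (hgrad i) (hconv i) L0 hL0 (hsmooth0 i) (x i) (xstar i)
  have hSCnn : 0 ≤ SC := by
    rw [hSCdef]; exact Finset.sum_nonneg fun i _ => sq_nonneg _
  -- psi Bregman identity
  have hinner0 : ∀ u : Vec d, ∑ i, ⟪xstar i - blkAvg xstar, u⟫ = 0 := by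
    intro u
    rw [← sum_inner, hsumb, inner_zero_left]
  have hbv : ∑ i, ⟪xstar i - blkAvg xstar, x i - xstar i⟫
      = ∑ i, (⟪xstar i - blkAvg xstar, x i - blkAvg x⟫
          - ‖xstar i - blkAvg xstar‖ ^ 2) := by
    have key : ∀ i, (⟪xstar i - blkAvg xstar, x i - xstar i⟫ : ℝ)
        = ⟪xstar i - blkAvg xstar, x i - blkAvg x⟫
          - ‖xstar i - blkAvg xstar‖ ^ 2
          + ⟪xstar i - blkAvg xstar, blkAvg x - blkAvg xstar⟫ := by
      intro i
      have hsplit : x i - xstar i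
          = ((x i - blkAvg x) - (xstar i - blkAvg xstar)) + (blkAvg x - blkAvg xstar) := by
        abel
      rw [hsplit, inner_add_right, inner_sub_right, real_inner_self_eq_norm_sq]
    rw [Finset.sum_congr rfl fun i _ => key i, Finset.sum_add_distrib, hinner0]
    simp
  have hsub : SC = ∑ i, ‖x i - blkAvg x‖ ^ 2
      - 2 * ∑ i, ⟪xstar i - blkAvg xstar, x i - blkAvg x⟫
      + ∑ i, ‖xstar i - blkAvg xstar‖ ^ 2 := by
    rw [hSCdef]
    have key : ∀ i, ‖(x i - blkAvg x) - (xstar i - blkAvg xstar)‖ ^ 2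
        = ‖x i - blkAvg x‖ ^ 2 - 2 * ⟪xstar i - blkAvg xstar, x i - blkAvg x⟫
          + ‖xstar i - blkAvg xstar‖ ^ 2 := by
      intro i
      rw [norm_sub_sq_real, real_inner_comm]
    rw [Finset.sum_congr rfl fun i _ => key i, Finset.sum_add_distrib,
      Finset.sum_sub_distrib, Finset.mul_sum]
  have hBpsi : psi x - psi xstar
      - (n:ℝ)⁻¹ * ∑ i, ⟪xstar i - blkAvg xstar, x i - xstar i⟫
      = 2⁻¹ * (n:ℝ)⁻¹ * SC := by
    rw [hbv, Finset.sum_sub_distrib, hsub, psi, psi]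
    have h2n : (2 * (n:ℝ))⁻¹ = 2⁻¹ * (n:ℝ)⁻¹ := by
      rw [mul_inv]
    rw [h2n]
    ring
  -- derivative of F along the segment x* + t v vanishes at t = 0
  set Df : ℝ := (n:ℝ)⁻¹ * ∑ i, ⟪g i (xstar i), x i - xstar i⟫ with hDfdef
  set Sp : ℝ := (n:ℝ)⁻¹ * ∑ i, ⟪xstar i - blkAvg xstar, x i - xstar i⟫ with hSpdef
  have havg : ∀ t : ℝ, blkAvg (xstar + t • v) = blkAvg xstar + t • blkAvg v := by
    intro t
    rw [blkAvg, blkAvg, blkAvg]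
    have hsum : ∑ i, (xstar + t • v) i = ∑ i, xstar i + t • ∑ i, v i := by
      rw [Finset.smul_sum, ← Finset.sum_add_distrib]
      refine Finset.sum_congr rfl fun i _ => ?_
      rw [PiLp.add_apply, PiLp.smul_apply]
    rw [hsum, smul_add, smul_smul, mul_comm, ← smul_smul]
  have hblock : ∀ (t : ℝ) i, (xstar + t • v) i - blkAvg (xstar + t • v)
      = (xstar i - blkAvg xstar) + t • ((x i - xstar i) - blkAvg v) := by
    intro t i
    rw [havg, PiLp.add_apply, PiLp.smul_apply, hvi, smul_sub]
    module
  set Sw : ℝ := (n:ℝ)⁻¹ * ∑ i, ⟪xstar i - blkAvg xstar, (x i - xstar i) - blkAvg v⟫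
    with hSwdef
  set Q : ℝ := 2⁻¹ * (n:ℝ)⁻¹ * ∑ i, ‖(x i - xstar i) - blkAvg v‖ ^ 2 with hQdef
  have hpsit : ∀ t : ℝ, psi (xstar + t • v) = psi xstar + t * Sw + t ^ 2 * Q := by
    intro t
    rw [psi, psi]
    have key : ∀ i, ‖(xstar + t • v) i - blkAvg (xstar + t • v)‖ ^ 2
        = ‖xstar i - blkAvg xstar‖ ^ 2
          + 2 * (t * ⟪xstar i - blkAvg xstar, (x i - xstar i) - blkAvg v⟫)
          + t ^ 2 * ‖(x i - xstar i) - blkAvg v‖ ^ 2 := by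
      intro i
      rw [hblock, norm_add_sq_real, real_inner_smul_right, norm_smul, Real.norm_eq_abs,
        mul_pow, sq_abs]
    rw [Finset.sum_congr rfl fun i _ => key i, Finset.sum_add_distrib,
      Finset.sum_add_distrib, ← Finset.mul_sum, ← Finset.mul_sum, ← Finset.mul_sum]
    rw [hSwdef, hQdef]
    have h2n : (2 * (n:ℝ))⁻¹ = 2⁻¹ * (n:ℝ)⁻¹ := by rw [mul_inv]
    rw [h2n]
    ring
  have hSwSp : Sw = Sp := by
    rw [hSwdef, hSpdef]
    congr 1
    have key : ∀ i, (⟪xstar i - blkAvg xstar, (x i - xstar i) - blkAvg v⟫ : ℝ)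
        = ⟪xstar i - blkAvg xstar, x i - xstar i⟫
          - ⟪xstar i - blkAvg xstar, blkAvg v⟫ := by
      intro i; rw [inner_sub_right]
    rw [Finset.sum_congr rfl fun i _ => key i, Finset.sum_sub_distrib, hinner0, sub_zero]
  have hder_f : HasDerivAt (fun t : ℝ => fTot f (xstar + t • v)) Df 0 := by
    have hfun : (fun t : ℝ => fTot f (xstar + t • v))
        = fun t => (n:ℝ)⁻¹ * ∑ i, f i (xstar i + t • (x i - xstar i)) := by
      funext t
      have hpt : ∀ i, (xstar + t • v) i = xstar i + t • (x i - xstar i) := fun i => by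
        rw [PiLp.add_apply, PiLp.smul_apply, hvi]
      simp only [fTot, hpt]
    rw [hDfdef, hfun]
    have hsum : HasDerivAt (fun t : ℝ => ∑ i, f i (xstar i + t • (x i - xstar i)))
        (∑ i, ⟪g i (xstar i), x i - xstar i⟫) 0 := by
      apply HasDerivAt.fun_sum
      intro i _
      have h0 : xstar i + (0:ℝ) • (x i - xstar i) = xstar i := by simp
      have hl := line_hasDerivAt (f i) (xstar i) (x i - xstar i) 0 (g i) (hgrad i _)
      rw [h0] at hl
      exact hl
    exact hsum.const_mul _
  have hder_psi : HasDerivAt (fun t : ℝ => psi (xstar + t • v)) Sw 0 := by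
    have hfun : (fun t : ℝ => psi (xstar + t • v))
        = fun t => psi xstar + t * Sw + t ^ 2 * Q := funext hpsit
    rw [hfun]
    have h1 : HasDerivAt (fun t : ℝ => psi xstar + t * Sw) Sw 0 := by
      simpa using ((hasDerivAt_id (0:ℝ)).mul_const Sw).const_add (psi xstar)
    have h2 : HasDerivAt (fun t : ℝ => t ^ 2 * Q) 0 0 := by
      simpa using (hasDerivAt_pow 2 (0:ℝ)).mul_const Q
    simpa using h1.fun_add h2
  have hder : HasDerivAt (fun t : ℝ => FF f lam (xstar + t • v)) (Df + lam * Sw) 0 := by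
    have h := hder_f.add (hder_psi.const_mul lam)
    have hfun : (fun t : ℝ => FF f lam (xstar + t • v))
        = fun t => fTot f (xstar + t • v) + lam * psi (xstar + t • v) := by
      funext t; rw [FF]
    rw [hfun]
    exact h
  have h0v : xstar + (0:ℝ) • v = xstar := by simp
  have hmin : IsLocalMin (fun t : ℝ => FF f lam (xstar + t • v)) 0 := by
    refine Filter.Eventually.of_forall fun t => ?_
    show FF f lam (xstar + (0:ℝ) • v) ≤ FF f lam (xstar + t • v)
    rw [h0v]
    exact hxstar _
  have hD0 : Df + lam * Sw = 0 := hmin.hasDerivAt_eq_zero hder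
  -- the objective gap equals the Bregman terms
  have hf : fTot f x - fTot f xstar - Df = (n:ℝ)⁻¹ * SB := by
    rw [fTot, fTot, hDfdef, hSBdef, Finset.sum_sub_distrib, Finset.sum_sub_distrib]
    ring
  have hSw' : Df + lam * Sp = 0 := by rw [← hSwSp]; exact hD0
  have hps2 : lam * (psi x - psi xstar - Sp) = lam * (2⁻¹ * (n:ℝ)⁻¹ * SC) := by
    rw [hSpdef, hBpsi]
  have hFdiff : FF f lam x - FF f lam xstar
      = (n:ℝ)⁻¹ * SB + lam * (2⁻¹ * (n:ℝ)⁻¹ * SC) := by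
    rw [FF, FF]
    linarith [hf, hps2, hSw']
  -- final combination
  rw [EN1, EN2, hFdiff]
  clear_value L0 M SA SC SB Df Sp Sw Q v
  have k1 : (1 / (1 - p)) * SA ≤ 2 * M * SB := by
    have t1 : (1 / (1 - p)) * SA ≤ (1 / (1 - p)) * (2 * L0 * SB) :=
      mul_le_mul_of_nonneg_left hSA (by positivity)
    have t2 : (1 / (1 - p)) * (2 * L0 * SB) = 2 * (L0 / (1 - p)) * SB := by
      field_simp
    have t3 : 2 * (L0 / (1 - p)) * SB ≤ 2 * M * SB := by
      nlinarith [mul_le_mul_of_nonneg_right hM1 hSBnn]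
    linarith
  have k2 : (lam ^ 2 / p) * SC ≤ M * lam * SC := by
    have e : lam ^ 2 / p = lam * (lam / p) := by ring
    rw [e]
    have h1 : lam * (lam / p) ≤ M * lam := by
      nlinarith [mul_le_mul_of_nonneg_left hM2 hlam]
    exact mul_le_mul_of_nonneg_right h1 hSCnn
  have hninv2 : (0:ℝ) ≤ (n:ℝ)⁻¹ ^ 2 := sq_nonneg _
  nlinarith [mul_le_mul_of_nonneg_left k1 hninv2, mul_le_mul_of_nonneg_left k2 hninv2]

end
end

section
/- Let each f_i : ℝ^d → ℝ be differentiable, L-smooth and μ-strongly convex with μ > 0, let λ ≥ 0, 0 < p < 1, and let x(λ) be the unique minimizer of F = f + λψ. Set 𝓛 = (1/n)·max{L/(1−p), λ/p} and σ² = (1/n²)·Σ_{i=1}^n [ (1/(1−p))·‖∇f_i(x_i(λ))‖² + (λ²/p)·‖x_i(λ) − x̄(λ)‖² ]. Let (ξ_k)_{k≥0} be i.i.d. Bernoulli random variables with P(ξ_k = 1) = p, and define the random sequence (x^k) in ℝ^{nd} by an arbitrary deterministic x^0 and x^{k+1} = x^k − α·(λ∇ψ(x^k)/p) if ξ_k =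 1 and x^{k+1} = x^k − α·(∇f(x^k)/(1−p)) if ξ_k = 0. If 0 < α ≤ 1/(2𝓛), then for every k ≥ 0: E‖x^k − x(λ)‖² ≤ (1 − αμ/n)^k·‖x^0 − x(λ)‖² + 2nασ²/μ. -/
open scoped BigOperators
open Finset

noncomputable section

/-- The L2GD iterates driven by the coin tosses `ξ`: if `ξ k = true` (probability `p`)
the aggregation step `x - α (λ/p) ∇ψ(x)` is taken; if `ξ k = false` (probability
`1−p`) the local GD step `x - α/(1−p) ∇f(x)` is taken. -/
def l2gdIter {n d : ℕ} (g : Fin n → Vec d → Vec d) (lam p α : ℝ)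
    (x0 : Blk n d) (ξ : ℕ → Bool) : ℕ → Blk n d
  | 0 => x0
  | k + 1 =>
    if ξ k then
      l2gdIter g lam p α x0 ξ k - α • (p⁻¹ • (lam • gradPsi (l2gdIter g lam p α x0 ξ k)))
    else
      l2gdIter g lam p α x0 ξ k - α • ((1 - p)⁻¹ • gradTot g (l2gdIter g lam p α x0 ξ k))

open scoped RealInnerProductSpace

variable {n d : ℕ}

lemma blk_norm_sq (x : Blk n d) : ‖x‖ ^ 2 = ∑ i, ‖x i‖ ^ 2 := PiLp.norm_sq_eq_of_L2 _ x
lemma blk_inner (x y : Blk n d) : ⟪x, y⟫ = ∑ i, ⟪x i, y i⟫ := PiLp.inner_apply x y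

/-- the centering map as a linear map -/
def PmL (n d : ℕ) : Blk n d →ₗ[ℝ] Blk n d where
  toFun x := WithLp.toLp 2 (fun i => x i - blkAvg x)
  map_add' x y := by
    refine PiLp.ext fun i => ?_
    simp only [blkAvg]
    show (x i + y i) - (n:ℝ)⁻¹ • ∑ j, (x j + y j) = (x i - (n:ℝ)⁻¹ • ∑ j, x j) + (y i - (n:ℝ)⁻¹ • ∑ j, y j)
    rw [Finset.sum_add_distrib, smul_add]; abel
  map_smul' c x := by
    refine PiLp.ext fun i => ?_
    simp only [blkAvg, RingHom.id_apply]
    show c • x i - (n:ℝ)⁻¹ • ∑ j, c • x j = c • (x i - (n:ℝ)⁻¹ • ∑ j, x j)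
    rw [← Finset.smul_sum, smul_sub, smul_comm]

def PmC (n d : ℕ) : Blk n d →L[ℝ] Blk n d :=
  { PmL n d with
    cont := by
      show Continuous (fun x : Blk n d => WithLp.toLp 2 (fun i => x i - blkAvg x))
      unfold blkAvg
      fun_prop }

lemma PmC_apply (x : Blk n d) (i : Fin n) : (PmC n d) x i = x i - blkAvg x := rfl

lemma sum_sub_avg (hn : 0 < n) (x : Blk n d) : ∑ i, (x i - blkAvg x) = 0 := by
  rw [Finset.sum_sub_distrib, Finset.sum_const, card_univ, Fintype.card_fin, blkAvg,
    ← Nat.cast_smul_eq_nsmul ℝ, smul_smul,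
    mul_inv_cancel₀ (by exact_mod_cast hn.ne' : (n:ℝ) ≠ 0), one_smul, sub_self]

lemma inner_Pm (hn : 0 < n) (x v : Blk n d) : ⟪(PmC n d) x, (PmC n d) v⟫ = ⟪(PmC n d) x, v⟫ := by
  rw [blk_inner, blk_inner]
  have : ∀ i, (⟪(PmC n d) x i, (PmC n d) v i⟫:ℝ)
      = ⟪(PmC n d) x i, v i⟫ - ⟪(PmC n d) x i, blkAvg v⟫ := by
    intro i; rw [PmC_apply x, PmC_apply v, inner_sub_right]
  simp_rw [this, Finset.sum_sub_distrib]
  have h0 : ∑ i, (⟪(PmC n d) x i, blkAvg v⟫:ℝ) = 0 := by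
    rw [← sum_inner]
    have : ∑ i, (PmC n d) x i = 0 := by
      simp_rw [PmC_apply]; exact sum_sub_avg hn x
    rw [this, inner_zero_left]
  rw [h0, sub_zero]

lemma psi_eq_inner (x : Blk n d) : psi x = (2 * n : ℝ)⁻¹ * ⟪(PmC n d) x, (PmC n d) x⟫ := by
  rw [psi, blk_inner]
  congr 1
  refine Finset.sum_congr rfl fun i _ => ?_
  rw [PmC_apply, real_inner_self_eq_norm_sq]

lemma gradPsi_eq (x : Blk n d) : gradPsi x = (n : ℝ)⁻¹ • (PmC n d) x := rfl

lemma hasGradientAt_psi (hn : 0 < n) (x : Blk n d) : HasGradientAt psi (gradPsi x) x := by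
  rw [hasGradientAt_iff_hasFDerivAt]
  have hP : HasFDerivAt (fun y : Blk n d => (PmC n d) y) (PmC n d) x := (PmC n d).hasFDerivAt
  have h1 := (hP.inner ℝ hP).const_mul ((2 * n : ℝ)⁻¹)
  have he : psi = fun y : Blk n d => (2 * n : ℝ)⁻¹ * ⟪(PmC n d) y, (PmC n d) y⟫ :=
    funext fun y => psi_eq_inner y
  rw [he]
  refine h1.congr_fderiv (Eq.symm ?_)
  refine ContinuousLinearMap.ext fun v => ?_
  simp only [ContinuousLinearMap.coe_comp', Function.comp_apply, ContinuousLinearMap.prod_apply,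
    fderivInnerCLM_apply, ContinuousLinearMap.coe_smul', Pi.smul_apply, smul_eq_mul,
    InnerProductSpace.toDual_apply_apply]
  have e1 : (⟪(PmC n d) x, (PmC n d) v⟫:ℝ) = ⟪(PmC n d) x, v⟫ := inner_Pm hn x v
  have e2 : (⟪(PmC n d) v, (PmC n d) x⟫:ℝ) = ⟪(PmC n d) x, v⟫ := by
    rw [real_inner_comm]; exact e1
  rw [gradPsi_eq, real_inner_smul_left, e1, e2, mul_inv]
  ring

lemma psi_bregman (hn : 0 < n) (y z : Blk n d) :
    psi z - psi y - ⟪gradPsi y, z - y⟫ = (2 * n : ℝ)⁻¹ * ‖(PmC n d) z - (PmC n d) y‖ ^ 2 := by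
  have hq : ∀ a b : Blk n d, (⟪(PmC n d) a, (PmC n d) b⟫:ℝ) = ⟪(PmC n d) a, b⟫ := inner_Pm hn
  have hmap : (PmC n d) (z - y) = (PmC n d) z - (PmC n d) y := map_sub _ z y
  have e1 : (⟪gradPsi y, z - y⟫:ℝ) = (n:ℝ)⁻¹ * (⟪(PmC n d) y, (PmC n d) z⟫ - ⟪(PmC n d) y, (PmC n d) y⟫) := by
    rw [gradPsi_eq, real_inner_smul_left, ← hq y (z - y), hmap, inner_sub_right]
  have e2 : ‖(PmC n d) z - (PmC n d) y‖ ^ 2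
      = ⟪(PmC n d) z, (PmC n d) z⟫ - 2 * ⟪(PmC n d) y, (PmC n d) z⟫ + ⟪(PmC n d) y, (PmC n d) y⟫ := by
    rw [← real_inner_self_eq_norm_sq, inner_sub_sub_self, real_inner_comm ((PmC n d) z) ((PmC n d) y)]
    ring
  rw [psi_eq_inner z, psi_eq_inner y, e1, e2, mul_inv]
  ring

lemma gradPsi_sub (y z : Blk n d) :
    gradPsi z - gradPsi y = (n : ℝ)⁻¹ • ((PmC n d) z - (PmC n d) y) := by
  rw [gradPsi_eq, gradPsi_eq, smul_sub]

lemma inner_gradTot (g : Fin n → Vec d → Vec d) (x w : Blk n d) :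
    (⟪gradTot g x, w⟫:ℝ) = (n:ℝ)⁻¹ * ∑ i, ⟪g i (x i), w i⟫ := by
  rw [blk_inner, Finset.mul_sum]
  exact Finset.sum_congr rfl fun i _ => real_inner_smul_left _ _ _

lemma hasGradientAt_fTot (f : Fin n → Vec d → ℝ) (g : Fin n → Vec d → Vec d)
    (hgrad : ∀ i (z : Vec d), HasGradientAt (f i) (g i z) z) (x : Blk n d) :
    HasGradientAt (fTot f) (gradTot g x) x := by
  rw [hasGradientAt_iff_hasFDerivAt]
  have h1 : ∀ i : Fin n, HasFDerivAt (fun y : Blk n d => f i (y i))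
      ((InnerProductSpace.toDual ℝ (Vec d) (g i (x i))).comp
        (PiLp.proj (𝕜 := ℝ) 2 (fun _ : Fin n => Vec d) i)) x := by
    intro i
    exact ((hgrad i (x i)).hasFDerivAt).comp x
      (PiLp.proj (𝕜 := ℝ) 2 (fun _ : Fin n => Vec d) i).hasFDerivAt
  have h2 := (HasFDerivAt.fun_sum (fun i (_ : i ∈ Finset.univ) => h1 i)).const_mul ((n:ℝ)⁻¹)
  have he : fTot f = fun y : Blk n d => (n:ℝ)⁻¹ * ∑ i, f i (y i) := rfl
  rw [he]
  refine h2.congr_fderiv (Eq.symm ?_)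
  refine ContinuousLinearMap.ext fun v => ?_
  simp only [ContinuousLinearMap.coe_smul', Pi.smul_apply, ContinuousLinearMap.coe_sum',
    Finset.sum_apply, ContinuousLinearMap.coe_comp', Function.comp_apply,
    InnerProductSpace.toDual_apply_apply, smul_eq_mul, PiLp.proj_apply]
  rw [inner_gradTot]

lemma hasGradientAt_FF (hn : 0 < n) (f : Fin n → Vec d → ℝ) (g : Fin n → Vec d → Vec d)
    (hgrad : ∀ i (z : Vec d), HasGradientAt (f i) (g i z) z) (lam : ℝ) (x : Blk n d) :
    HasGradientAt (FF f lam) (gradTot g x + lam • gradPsi x) x := by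
  rw [hasGradientAt_iff_hasFDerivAt]
  have h1 := (hasGradientAt_fTot f g hgrad x).hasFDerivAt
  have h2 := ((hasGradientAt_psi hn x).hasFDerivAt).const_mul lam
  have := h1.add h2
  have he : FF f lam = fun y => fTot f y + lam * psi y := rfl
  rw [he]
  refine this.congr_fderiv (Eq.symm ?_)
  refine ContinuousLinearMap.ext fun v => ?_
  simp only [ContinuousLinearMap.add_apply, ContinuousLinearMap.coe_smul', Pi.smul_apply,
    InnerProductSpace.toDual_apply_apply, smul_eq_mul, inner_add_left, real_inner_smul_left]

lemma gradFF_zero (hn : 0 < n) (f : Fin n → Vec d → ℝ) (g : Fin n → Vec d → Vec d)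
    (hgrad : ∀ i (z : Vec d), HasGradientAt (f i) (g i z) z) (lam : ℝ)
    (xlam : Blk n d) (hxlam : ∀ y : Blk n d, FF f lam xlam ≤ FF f lam y) :
    gradTot g xlam + lam • gradPsi xlam = 0 := by
  have hmin : IsLocalMin (FF f lam) xlam := Filter.Eventually.of_forall hxlam
  have h0 := hmin.hasFDerivAt_eq_zero (hasGradientAt_FF hn f g hgrad lam xlam).hasFDerivAt
  have := congrArg (fun T => (InnerProductSpace.toDual ℝ (Blk n d)).symm T) h0
  simpa using this

section Generic
variable {E : Type*} [NormedAddCommGroup E] [InnerProductSpace ℝ E] [CompleteSpace E]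

lemma lineDeriv17 (h : E → ℝ) (G : E → E) (hG : ∀ w, HasGradientAt h (G w) w) (u v : E) (t : ℝ) :
    HasDerivAt (fun s : ℝ => h (s • (v - u) + u)) ⟪G (t • (v - u) + u), v - u⟫ t := by
  have h1 : HasDerivAt (fun s : ℝ => s • (v - u) + u) (v - u) t := by
    simpa using ((hasDerivAt_id t).smul_const (v - u)).add_const u
  simpa [InnerProductSpace.toDual_apply_apply, Function.comp_def] using
    ((hG (t • (v - u) + u)).hasFDerivAt).comp_hasDerivAt t h1

/-- first-order condition for convexity -/
lemma convex_fo (h : E → ℝ) (G : E → E) (hG : ∀ w, HasGradientAt h (G w) w)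
    (hconv : ConvexOn ℝ Set.univ h) (u v : E) : h u + ⟪G u, v - u⟫ ≤ h v := by
  have hφ : ConvexOn ℝ Set.univ (fun s : ℝ => h (s • (v - u) + u)) := by
    have := hconv.comp_affineMap (AffineMap.lineMap u v)
    simpa [Function.comp_def, AffineMap.lineMap_apply_module'] using this
  have hd := lineDeriv17 h G hG u v 0
  have := hφ.le_slope_of_hasDerivAt (Set.mem_univ (0:ℝ)) (Set.mem_univ 1) one_pos (by simpa using hd)
  rw [slope_def_field] at this
  simp only [one_smul, zero_smul, zero_add, sub_zero, div_one, sub_add_cancel] at this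
  linarith

/-- descent lemma -/
lemma descent (h : E → ℝ) (G : E → E) (hG : ∀ w, HasGradientAt h (G w) w)
    (L : ℝ) (hLip : ∀ a b, ‖G a - G b‖ ≤ L * ‖a - b‖) (u v : E) :
    h v ≤ h u + ⟪G u, v - u⟫ + L / 2 * ‖v - u‖ ^ 2 := by
  set c : ℝ := ⟪G u, v - u⟫ with hc
  set ψ : ℝ → ℝ := fun s => h (s • (v - u) + u) - s * c - L / 2 * s ^ 2 * ‖v - u‖ ^ 2 with hψ
  have hd : ∀ t : ℝ, HasDerivAt ψ
      (⟪G (t • (v - u) + u), v - u⟫ - c - L * t * ‖v - u‖ ^ 2) t := by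
    intro t
    have h1 := lineDeriv17 h G hG u v t
    have h2 : HasDerivAt (fun s : ℝ => s * c) c t := by simpa using (hasDerivAt_id t).mul_const c
    have h3 : HasDerivAt (fun s : ℝ => L / 2 * s ^ 2 * ‖v - u‖ ^ 2)
        (L * t * ‖v - u‖ ^ 2) t := by
      have : HasDerivAt (fun s : ℝ => s ^ 2) (2 * t) t := by
        simpa using (hasDerivAt_pow 2 t)
      have := (this.const_mul (L / 2)).mul_const (‖v - u‖ ^ 2)
      refine this.congr_deriv ?_; ring
    exact (h1.sub h2).sub h3
  have hmono : AntitoneOn ψ (Set.Icc 0 1) := by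
    apply antitoneOn_of_deriv_nonpos (convex_Icc 0 1)
    · exact fun t _ => ((hd t).differentiableAt).continuousAt.continuousWithinAt
    · exact fun t _ => ((hd t).differentiableAt).differentiableWithinAt
    · intro t ht
      rw [interior_Icc] at ht
      rw [(hd t).deriv]
      have hb : ⟪G (t • (v - u) + u) - G u, v - u⟫ ≤ L * t * ‖v - u‖ ^ 2 := by
        calc ⟪G (t • (v - u) + u) - G u, v - u⟫ ≤ ‖G (t • (v - u) + u) - G u‖ * ‖v - u‖ :=
              real_inner_le_norm _ _
          _ ≤ (L * ‖t • (v - u) + u - u‖) * ‖v - u‖ := by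
              have := hLip (t • (v - u) + u) u
              have hn : (0:ℝ) ≤ ‖v - u‖ := norm_nonneg _
              nlinarith [norm_nonneg (G (t • (v - u) + u) - G u)]
          _ = L * t * ‖v - u‖ ^ 2 := by
              rw [add_sub_cancel_right, norm_smul, Real.norm_eq_abs, abs_of_pos ht.1]; ring
      rw [inner_sub_left] at hb
      linarith
  have := hmono (Set.left_mem_Icc.2 one_pos.le) (Set.right_mem_Icc.2 one_pos.le) one_pos.le
  simp only [hψ, one_smul, zero_smul, zero_add, sub_add_cancel, one_pow, zero_pow, one_mul,
    zero_mul, mul_zero, sub_zero] at this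
  linarith

lemma grad_half_sq (c : ℝ) (x : E) : HasGradientAt (fun y : E => c / 2 * ‖y‖ ^ 2) (c • x) x := by
  rw [hasGradientAt_iff_hasFDerivAt]
  have h1 : HasFDerivAt (fun y : E => (⟪y, y⟫ : ℝ))
      ((innerSL ℝ x) + (innerSL ℝ x)) x := by
    have := (hasFDerivAt_id x).inner ℝ (hasFDerivAt_id x)
    refine this.congr_fderiv (Eq.symm ?_)
    ext v
    simp [real_inner_comm]
  have h2 := h1.const_mul (c / 2)
  have he : (fun y : E => c / 2 * ‖y‖ ^ 2) = fun y : E => c / 2 * ⟪y, y⟫ := by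
    funext y; rw [real_inner_self_eq_norm_sq]
  rw [he]
  refine h2.congr_fderiv (Eq.symm ?_)
  ext v
  simp [InnerProductSpace.toDual_apply_apply, real_inner_smul_left, real_inner_comm]
  ring

/-- first-order condition for strong convexity -/
lemma strong_fo (h : E → ℝ) (G : E → E) (hG : ∀ w, HasGradientAt h (G w) w)
    (μ : ℝ) (hsc : StrongConvexOn Set.univ μ h) (u v : E) :
    h u + ⟪G u, v - u⟫ + μ / 2 * ‖v - u‖ ^ 2 ≤ h v := by
  have hconv : ConvexOn ℝ Set.univ (fun x : E => h x - μ / 2 * ‖x‖ ^ 2) :=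
    strongConvexOn_iff_convex.mp hsc
  have hG' : ∀ w : E, HasGradientAt (fun x : E => h x - μ / 2 * ‖x‖ ^ 2) (G w - μ • w) w := by
    intro w
    rw [hasGradientAt_iff_hasFDerivAt]
    have := ((hG w).hasFDerivAt).sub ((grad_half_sq μ w).hasFDerivAt)
    refine this.congr_fderiv (Eq.symm ?_)
    ext z
    simp [InnerProductSpace.toDual_apply_apply, inner_sub_left]
  have := convex_fo _ _ hG' hconv u v
  simp only [inner_sub_left, real_inner_smul_left] at this
  have h1 : ‖v - u‖ ^ 2 = ‖v‖ ^ 2 - 2 * ⟪v, u⟫ + ‖u‖ ^ 2 := norm_sub_sq_real v u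
  have h2 : ⟪u, v - u⟫ = ⟪v, u⟫ - ‖u‖ ^ 2 := by
    rw [inner_sub_right, real_inner_comm u v, real_inner_self_eq_norm_sq]
  rw [h2] at this
  rw [h1]
  linarith

/-- cocoercivity -/
lemma cocoercive (h : E → ℝ) (G : E → E) (L : ℝ) (hL : 0 < L)
    (hFO : ∀ a b, h a + ⟪G a, b - a⟫ ≤ h b)
    (hdesc : ∀ a b, h b ≤ h a + ⟪G a, b - a⟫ + L / 2 * ‖b - a‖ ^ 2) (u v : E) :
    ‖G u - G v‖ ^ 2 ≤ 2 * L * (h u - h v - ⟪G v, u - v⟫) := by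
  set w := G u - G v with hw
  set z := u - L⁻¹ • w with hz
  have e1 : z - u = -(L⁻¹ • w) := by rw [hz]; abel
  have h1 := hdesc u z
  have h2 := hFO v z
  have e2 : ⟪G u, z - u⟫ = -(L⁻¹ * ⟪G u, w⟫) := by
    rw [e1, inner_neg_right, real_inner_smul_right]
  have e3 : ‖z - u‖ ^ 2 = L⁻¹ ^ 2 * ‖w‖ ^ 2 := by
    rw [e1, norm_neg, norm_smul, Real.norm_eq_abs, abs_of_pos (inv_pos.2 hL), mul_pow]
  have e4 : ⟪G v, z - v⟫ = ⟪G v, u - v⟫ - L⁻¹ * ⟪G v, w⟫ := by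
    have : z - v = (u - v) + (z - u) := by abel
    rw [this, inner_add_right, e1, inner_neg_right, real_inner_smul_right]; ring
  have e5 : ⟪G u, w⟫ - ⟪G v, w⟫ = ‖w‖ ^ 2 := by
    rw [← inner_sub_left, ← hw, real_inner_self_eq_norm_sq]
  rw [e2, e3] at h1
  rw [e4] at h2
  have hL' : (0:ℝ) < L⁻¹ := inv_pos.2 hL
  have key : L⁻¹ * ‖w‖ ^ 2 - L / 2 * (L⁻¹ ^ 2 * ‖w‖ ^ 2) ≤ h u - h v - ⟪G v, u - v⟫ := by
    nlinarith [h1, h2, e5]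
  have : L⁻¹ * ‖w‖ ^ 2 - L / 2 * (L⁻¹ ^ 2 * ‖w‖ ^ 2) = ‖w‖ ^ 2 / (2 * L) := by
    field_simp; ring
  rw [this] at key
  rw [div_le_iff₀ (by positivity)] at key
  linarith [key]

end Generic

variable {n d : ℕ}

lemma blk_sub_apply (x y : Blk n d) (i : Fin n) : (x - y) i = x i - y i := rfl

lemma sq_norm_le_two (a b : Blk n d) : ‖a‖ ^ 2 ≤ 2 * ‖a - b‖ ^ 2 + 2 * ‖b‖ ^ 2 := by
  have h : ‖a‖ ≤ ‖a - b‖ + ‖b‖ := by simpa using norm_add_le (a - b) b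
  have h2 : ‖a‖ ^ 2 ≤ (‖a - b‖ + ‖b‖) ^ 2 := by
    have := pow_le_pow_left₀ (norm_nonneg a) h 2
    simpa using this
  nlinarith [sq_nonneg (‖a - b‖ - ‖b‖)]

lemma fTot_strong_fo (f : Fin n → Vec d → ℝ) (g : Fin n → Vec d → Vec d)
    (hgrad : ∀ i (z : Vec d), HasGradientAt (f i) (g i z) z) (μ : ℝ)
    (hsc : ∀ i, StrongConvexOn Set.univ μ (f i)) (x y : Blk n d) :
    fTot f y + ⟪gradTot g y, x - y⟫ + μ / (2 * n) * ‖x - y‖ ^ 2 ≤ fTot f x := by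
  have key : ∀ i ∈ Finset.univ, f i (y i) + ⟪g i (y i), x i - y i⟫ + μ / 2 * ‖x i - y i‖ ^ 2
      ≤ f i (x i) := fun i _ => strong_fo (f i) (g i) (hgrad i) μ (hsc i) (y i) (x i)
  have hsum := Finset.sum_le_sum key
  have hn0 : (0:ℝ) ≤ (n:ℝ)⁻¹ := by positivity
  have hmul := mul_le_mul_of_nonneg_left hsum hn0
  simp only [Finset.sum_add_distrib, mul_add] at hmul
  have hip : (⟪gradTot g y, x - y⟫:ℝ) = (n:ℝ)⁻¹ * ∑ i, ⟪g i (y i), x i - y i⟫ := by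
    rw [inner_gradTot]; simp only [blk_sub_apply]
  have hnrm : ‖x - y‖ ^ 2 = ∑ i, ‖x i - y i‖ ^ 2 := by
    rw [blk_norm_sq]; simp only [blk_sub_apply]
  have hc : μ / (2 * (n:ℝ)) * ∑ i, ‖x i - y i‖ ^ 2 = (n:ℝ)⁻¹ * ∑ i, μ / 2 * ‖x i - y i‖ ^ 2 := by
    rw [Finset.mul_sum, Finset.mul_sum]
    refine Finset.sum_congr rfl fun i _ => ?_
    rw [div_eq_mul_inv, div_eq_mul_inv, mul_inv]
    ring
  rw [fTot, fTot, hip, hnrm, hc]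
  linarith

lemma fTot_fo (f : Fin n → Vec d → ℝ) (g : Fin n → Vec d → Vec d)
    (hgrad : ∀ i (z : Vec d), HasGradientAt (f i) (g i z) z) (μ : ℝ) (hμ0 : 0 ≤ μ)
    (hsc : ∀ i, StrongConvexOn Set.univ μ (f i)) (x y : Blk n d) :
    fTot f y + ⟪gradTot g y, x - y⟫ ≤ fTot f x := by
  have := fTot_strong_fo f g hgrad μ hsc x y
  have h0 : 0 ≤ μ / (2 * (n:ℝ)) * ‖x - y‖ ^ 2 :=
    mul_nonneg (div_nonneg hμ0 (by positivity)) (sq_nonneg _)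
  linarith

lemma gradTot_cocoercive (f : Fin n → Vec d → ℝ) (g : Fin n → Vec d → Vec d)
    (hgrad : ∀ i (z : Vec d), HasGradientAt (f i) (g i z) z) (μ L : ℝ) (hμ0 : 0 ≤ μ)
    (hsc : ∀ i, StrongConvexOn Set.univ μ (f i)) (hL : 0 < L)
    (hsmooth : ∀ i (a b : Vec d), ‖g i a - g i b‖ ≤ L * ‖a - b‖) (x y : Blk n d) :
    ‖gradTot g x - gradTot g y‖ ^ 2
      ≤ 2 * L / n * (fTot f x - fTot f y - ⟪gradTot g y, x - y⟫) := by
  have co : ∀ i, ‖g i (x i) - g i (y i)‖ ^ 2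
      ≤ 2 * L * (f i (x i) - f i (y i) - ⟪g i (y i), x i - y i⟫) := by
    intro i
    refine cocoercive (f i) (g i) L hL ?_ ?_ (x i) (y i)
    · intro a b
      have := strong_fo (f i) (g i) (hgrad i) μ (hsc i) a b
      nlinarith [mul_nonneg hμ0 (sq_nonneg ‖b - a‖)]
    · intro a b
      exact descent (f i) (g i) (hgrad i) L (fun u v => hsmooth i u v) a b
  have happ : ∀ i : Fin n, (gradTot g x - gradTot g y) i = (n:ℝ)⁻¹ • (g i (x i) - g i (y i)) := by
    intro i
    show gradTot g x i - gradTot g y i = _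
    rw [gradTot, gradTot, smul_sub]
  rw [blk_norm_sq]
  have hstep : ∀ i : Fin n, ‖(gradTot g x - gradTot g y) i‖ ^ 2
      = ((n:ℝ)^2)⁻¹ * ‖g i (x i) - g i (y i)‖ ^ 2 := by
    intro i
    rw [happ i, norm_smul, mul_pow, Real.norm_eq_abs, sq_abs, ← inv_pow]
  simp_rw [hstep]
  have h1 : ∑ i, ((n:ℝ)^2)⁻¹ * ‖g i (x i) - g i (y i)‖ ^ 2
      ≤ ∑ i, ((n:ℝ)^2)⁻¹ * (2 * L * (f i (x i) - f i (y i) - ⟪g i (y i), x i - y i⟫)) := by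
    refine Finset.sum_le_sum fun i _ => ?_
    exact mul_le_mul_of_nonneg_left (co i) (by positivity)
  refine h1.trans (le_of_eq ?_)
  rw [inner_gradTot, fTot, fTot]
  simp_rw [← Finset.mul_sum]
  rw [Finset.sum_sub_distrib, Finset.sum_sub_distrib]
  simp only [blk_sub_apply]
  rw [div_eq_mul_inv, ← inv_pow]
  ring

variable {n d : ℕ}

set_option maxHeartbeats 1000000 in
lemma l2gd_step (hn : 0 < n) (L μ lam p α : ℝ) (hμ : 0 < μ) (hlam : 0 ≤ lam)
    (hp0 : 0 < p) (hp1 : p < 1) (hL : 0 < L)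
    (f : Fin n → Vec d → ℝ) (g : Fin n → Vec d → Vec d)
    (hgrad : ∀ i (z : Vec d), HasGradientAt (f i) (g i z) z)
    (hsmooth : ∀ i (a b : Vec d), ‖g i a - g i b‖ ≤ L * ‖a - b‖)
    (hsc : ∀ i, StrongConvexOn Set.univ μ (f i))
    (xlam : Blk n d) (hxlam : ∀ y : Blk n d, FF f lam xlam ≤ FF f lam y)
    (hα0 : 0 < α) (hα2 : 2 * α * ((n : ℝ)⁻¹ * max (L / (1 - p)) (lam / p)) ≤ 1)
    (x : Blk n d) :
    p * ‖x - α • (p⁻¹ • (lam • gradPsi x)) - xlam‖ ^ 2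
      + (1 - p) * ‖x - α • ((1 - p)⁻¹ • gradTot g x) - xlam‖ ^ 2
    ≤ (1 - α * μ / n) * ‖x - xlam‖ ^ 2
      + 2 * α ^ 2 * ((lam ^ 2 / p) * ‖gradPsi xlam‖ ^ 2
          + (1 / (1 - p)) * ‖gradTot g xlam‖ ^ 2) := by
  have hnR : (0:ℝ) < n := Nat.cast_pos.mpr hn
  have hn' : ((n:ℝ)) ≠ 0 := hnR.ne'
  have h1p : (0:ℝ) < 1 - p := by linarith
  set w := x - xlam with hw
  set Gψ := gradPsi x with hGψ
  set Gψs := gradPsi xlam with hGψs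
  set Gf := gradTot g x with hGf
  set Gfs := gradTot g xlam with hGfs
  have expand : ∀ (t : ℝ) (v : Blk n d),
      ‖x - t • v - xlam‖ ^ 2 = ‖w‖ ^ 2 - 2 * (t * ⟪w, v⟫) + t ^ 2 * ‖v‖ ^ 2 := by
    intro t v
    have hxv : x - t • v - xlam = w - t • v := by rw [hw]; abel
    rw [hxv, norm_sub_sq_real, real_inner_smul_right, norm_smul, mul_pow, Real.norm_eq_abs,
      sq_abs]
  have e1 : x - α • (p⁻¹ • (lam • Gψ)) - xlam = x - (α * (p⁻¹ * lam)) • Gψ - xlam := by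
    rw [smul_smul, smul_smul, mul_assoc]
  have e2 : x - α • ((1 - p)⁻¹ • Gf) - xlam = x - (α * (1 - p)⁻¹) • Gf - xlam := by
    rw [smul_smul]
  rw [e1, e2, expand, expand]
  -- key scalar reformulation
  have key : p * (‖w‖ ^ 2 - 2 * (α * (p⁻¹ * lam) * ⟪w, Gψ⟫) + (α * (p⁻¹ * lam)) ^ 2 * ‖Gψ‖ ^ 2)
      + (1 - p) * (‖w‖ ^ 2 - 2 * (α * (1 - p)⁻¹ * ⟪w, Gf⟫) + (α * (1 - p)⁻¹) ^ 2 * ‖Gf‖ ^ 2)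
      = ‖w‖ ^ 2 - 2 * α * (lam * ⟪w, Gψ⟫ + ⟪w, Gf⟫)
        + α ^ 2 * (lam ^ 2 / p) * ‖Gψ‖ ^ 2 + α ^ 2 * (1 / (1 - p)) * ‖Gf‖ ^ 2 := by
    field_simp
    ring
  rw [key]
  -- bounds
  have hbψ : ‖Gψ‖ ^ 2 ≤ 2 * ‖Gψ - Gψs‖ ^ 2 + 2 * ‖Gψs‖ ^ 2 := sq_norm_le_two _ _
  have hbf : ‖Gf‖ ^ 2 ≤ 2 * ‖Gf - Gfs‖ ^ 2 + 2 * ‖Gfs‖ ^ 2 := sq_norm_le_two _ _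
  set Df := fTot f x - fTot f xlam - ⟪Gfs, w⟫ with hDf
  set Dψ := psi x - psi xlam - ⟪Gψs, w⟫ with hDψ
  have hDf0 : 0 ≤ Df := by
    have := fTot_fo f g hgrad μ hμ.le hsc x xlam
    rw [hDf, hw]; linarith
  have hcf : ‖Gf - Gfs‖ ^ 2 ≤ 2 * L / n * Df := by
    have := gradTot_cocoercive f g hgrad μ L hμ.le hsc hL hsmooth x xlam
    rw [hDf, hw]; exact this
  have hDψval : Dψ = (2 * (n:ℝ))⁻¹ * ‖(PmC n d) x - (PmC n d) xlam‖ ^ 2 := by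
    rw [hDψ, hw]; exact psi_bregman hn xlam x
  have hDψ0 : 0 ≤ Dψ := by rw [hDψval]; positivity
  have hcψ : ‖Gψ - Gψs‖ ^ 2 = 2 / n * Dψ := by
    have hgs : Gψ - Gψs = (n:ℝ)⁻¹ • ((PmC n d) x - (PmC n d) xlam) := by
      rw [hGψ, hGψs]; exact gradPsi_sub xlam x
    rw [hgs, norm_smul, mul_pow, Real.norm_eq_abs, sq_abs, hDψval]
    field_simp
  have hg0 : Gfs + lam • Gψs = 0 := gradFF_zero hn f g hgrad lam xlam hxlam
  have hip0 : (⟪Gfs, w⟫ : ℝ) + lam * ⟪Gψs, w⟫ = 0 := by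
    rw [← real_inner_smul_left, ← inner_add_left, hg0, inner_zero_left]
  have hFFd : Df + lam * Dψ = FF f lam x - FF f lam xlam := by
    rw [hDf, hDψ, FF, FF]
    linear_combination (-1 : ℝ) * hip0
  have hFF0 : 0 ≤ FF f lam x - FF f lam xlam := sub_nonneg.2 (hxlam x)
  -- strong convexity lower bound
  have hi1 : (⟪Gf, xlam - x⟫ : ℝ) = -⟪w, Gf⟫ := by
    rw [show xlam - x = -w by rw [hw]; abel, inner_neg_right, real_inner_comm]
  have hi2 : (⟪Gψ, xlam - x⟫ : ℝ) = -⟪w, Gψ⟫ := by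
    rw [show xlam - x = -w by rw [hw]; abel, inner_neg_right, real_inner_comm]
  have hnw : ‖xlam - x‖ = ‖w‖ := by rw [hw, norm_sub_rev]
  have hstr1 := fTot_strong_fo f g hgrad μ hsc xlam x
  rw [← hGf, hi1, hnw] at hstr1
  have hstr2 : psi x + -⟪w, Gψ⟫ ≤ psi xlam := by
    have hb := psi_bregman hn x xlam
    rw [← hGψ, hi2] at hb
    have h0 : 0 ≤ (2 * (n:ℝ))⁻¹ * ‖(PmC n d) xlam - (PmC n d) x‖ ^ 2 := by positivity
    linarith
  have F5 : FF f lam x - FF f lam xlam + μ / (2 * n) * ‖w‖ ^ 2 ≤ ⟪w, Gf⟫ + lam * ⟪w, Gψ⟫ := by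
    have h2 := mul_le_mul_of_nonneg_left hstr2 hlam
    rw [FF, FF]
    linarith [hstr1, h2]
  -- smoothness combination
  set 𝓛 : ℝ := (n : ℝ)⁻¹ * max (L / (1 - p)) (lam / p) with h𝓛
  have hmax1 : (n:ℝ)⁻¹ * (L / (1 - p)) ≤ 𝓛 := by
    rw [h𝓛]
    exact mul_le_mul_of_nonneg_left (le_max_left _ _) (by positivity)
  have hmax2 : (n:ℝ)⁻¹ * (lam / p) ≤ 𝓛 := by
    rw [h𝓛]
    exact mul_le_mul_of_nonneg_left (le_max_right _ _) (by positivity)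
  have F6 : (lam ^ 2 / p) * ‖Gψ - Gψs‖ ^ 2 + (1 / (1 - p)) * ‖Gf - Gfs‖ ^ 2
      ≤ 2 * 𝓛 * (FF f lam x - FF f lam xlam) := by
    have t1 : (lam ^ 2 / p) * ‖Gψ - Gψs‖ ^ 2 ≤ 2 * 𝓛 * (lam * Dψ) := by
      rw [hcψ]
      have hlamDψ : 0 ≤ lam * Dψ := mul_nonneg hlam hDψ0
      have heq : (lam ^ 2 / p) * (2 / n * Dψ) = 2 * ((n:ℝ)⁻¹ * (lam / p)) * (lam * Dψ) := by
        simp only [div_eq_mul_inv]; ring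
      rw [heq]
      linarith [mul_le_mul_of_nonneg_right hmax2 hlamDψ]
    have t2 : (1 / (1 - p)) * ‖Gf - Gfs‖ ^ 2 ≤ 2 * 𝓛 * Df := by
      have h1 : (1 / (1 - p)) * ‖Gf - Gfs‖ ^ 2 ≤ (1 / (1 - p)) * (2 * L / n * Df) :=
        mul_le_mul_of_nonneg_left hcf (by positivity)
      have h2 : (1 / (1 - p)) * (2 * L / n * Df) = 2 * ((n:ℝ)⁻¹ * (L / (1 - p))) * Df := by
        simp only [div_eq_mul_inv, one_div]; ring
      rw [h2] at h1
      linarith [h1, mul_le_mul_of_nonneg_right hmax1 hDf0]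
    calc (lam ^ 2 / p) * ‖Gψ - Gψs‖ ^ 2 + (1 / (1 - p)) * ‖Gf - Gfs‖ ^ 2
        ≤ 2 * 𝓛 * (lam * Dψ) + 2 * 𝓛 * Df := add_le_add t1 t2
      _ = 2 * 𝓛 * (Df + lam * Dψ) := by ring
      _ = 2 * 𝓛 * (FF f lam x - FF f lam xlam) := by rw [hFFd]
  have h𝓛0 : 0 < 𝓛 := by
    rw [h𝓛]
    exact mul_pos (by positivity) (lt_of_lt_of_le (div_pos hL h1p) (le_max_left _ _))
  have F7 : 2 * α ^ 2 * (2 * 𝓛 * (FF f lam x - FF f lam xlam))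
      ≤ 2 * α * (FF f lam x - FF f lam xlam) := by
    have hh : 0 ≤ α * (FF f lam x - FF f lam xlam) * (1 - 2 * α * 𝓛) :=
      mul_nonneg (mul_nonneg hα0.le hFF0) (by linarith)
    nlinarith [hh]
  -- final assembly
  have T1 : α ^ 2 * (lam ^ 2 / p) * ‖Gψ‖ ^ 2
      ≤ 2 * α ^ 2 * (lam ^ 2 / p) * ‖Gψ - Gψs‖ ^ 2 + 2 * α ^ 2 * (lam ^ 2 / p) * ‖Gψs‖ ^ 2 := by
    have hc : (0:ℝ) ≤ α ^ 2 * (lam ^ 2 / p) := by positivity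
    linarith [mul_le_mul_of_nonneg_left hbψ hc]
  have T2 : α ^ 2 * (1 / (1 - p)) * ‖Gf‖ ^ 2
      ≤ 2 * α ^ 2 * (1 / (1 - p)) * ‖Gf - Gfs‖ ^ 2 + 2 * α ^ 2 * (1 / (1 - p)) * ‖Gfs‖ ^ 2 := by
    have hc : (0:ℝ) ≤ α ^ 2 * (1 / (1 - p)) := by positivity
    linarith [mul_le_mul_of_nonneg_left hbf hc]
  have T3 : 2 * α ^ 2 * (lam ^ 2 / p) * ‖Gψ - Gψs‖ ^ 2
        + 2 * α ^ 2 * (1 / (1 - p)) * ‖Gf - Gfs‖ ^ 2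
      ≤ 2 * α ^ 2 * (2 * 𝓛 * (FF f lam x - FF f lam xlam)) := by
    have hc : (0:ℝ) ≤ 2 * α ^ 2 := by positivity
    linarith [mul_le_mul_of_nonneg_left F6 hc]
  have T5 : 2 * α * (FF f lam x - FF f lam xlam) + 2 * α * (μ / (2 * n)) * ‖w‖ ^ 2
      ≤ 2 * α * (lam * ⟪w, Gψ⟫ + ⟪w, Gf⟫) := by
    linarith [mul_le_mul_of_nonneg_left F5 (by positivity : (0:ℝ) ≤ 2 * α)]
  have hμn : 2 * α * (μ / (2 * (n:ℝ))) * ‖w‖ ^ 2 = α * μ / n * ‖w‖ ^ 2 := by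
    field_simp
  rw [hμn] at T5
  linarith [T1, T2, T3, F7, T5]

lemma l2gdIter_congr (g : Fin n → Vec d → Vec d) (lam p α : ℝ) (x0 : Blk n d)
    (ξ ξ' : ℕ → Bool) : ∀ k : ℕ, (∀ j, j < k → ξ j = ξ' j) →
    l2gdIter g lam p α x0 ξ k = l2gdIter g lam p α x0 ξ' k := by
  intro k
  induction k with
  | zero => intro _; rfl
  | succ m ih =>
    intro h
    have hm := ih (fun j hj => h j (Nat.lt_succ_of_lt hj))
    simp only [l2gdIter, hm, h m (Nat.lt_succ_self m)]

lemma sum_snoc_split {k : ℕ} (F : (Fin (k + 1) → Bool) → ℝ) :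
    ∑ ω : Fin (k + 1) → Bool, F ω = ∑ ω : Fin k → Bool, ∑ b : Bool, F (Fin.snoc ω b) := by
  rw [← Equiv.sum_comp (Fin.snocEquiv (fun _ => Bool)) F, Fintype.sum_prod_type]
  rw [Finset.sum_comm]
  rfl

lemma prod_snoc (p : ℝ) {m : ℕ} (ω : Fin m → Bool) (b : Bool) :
    (∏ j, if (Fin.snoc ω b : Fin (m + 1) → Bool) j then p else 1 - p)
      = (∏ j, if ω j then p else 1 - p) * (if b then p else 1 - p) := by
  rw [Fin.prod_univ_castSucc]
  congr 1
  · exact Finset.prod_congr rfl fun j _ => by rw [Fin.snoc_castSucc]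
  · rw [Fin.snoc_last]

lemma iter_snoc (g : Fin n → Vec d → Vec d) (lam p α : ℝ) (x0 : Blk n d)
    (m : ℕ) (ω : Fin m → Bool) (b : Bool) :
    l2gdIter g lam p α x0
        (fun j => if h : j < m + 1 then (Fin.snoc ω b : Fin (m + 1) → Bool) ⟨j, h⟩ else false)
        (m + 1)
      = (let y := l2gdIter g lam p α x0 (fun j => if h : j < m then ω ⟨j, h⟩ else false) m
         cond b (y - α • (p⁻¹ • (lam • gradPsi y))) (y - α • ((1 - p)⁻¹ • gradTot g y))) := by
  have hcongr : l2gdIter g lam p α x0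
      (fun j => if h : j < m + 1 then (Fin.snoc ω b : Fin (m + 1) → Bool) ⟨j, h⟩ else false) m
      = l2gdIter g lam p α x0 (fun j => if h : j < m then ω ⟨j, h⟩ else false) m := by
    apply l2gdIter_congr
    intro j hj
    have hj1 : j < m + 1 := Nat.lt_succ_of_lt hj
    simp only [dif_pos hj, dif_pos hj1]
    show (Fin.snoc ω b : Fin (m + 1) → Bool) (Fin.castSucc ⟨j, hj⟩) = ω ⟨j, hj⟩
    rw [Fin.snoc_castSucc]
  have hξ : (fun j => if h : j < m + 1 then (Fin.snoc ω b : Fin (m + 1) → Bool) ⟨j, h⟩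
      else false) m = b := by
    simp only [dif_pos (Nat.lt_succ_self m)]
    show (Fin.snoc ω b : Fin (m + 1) → Bool) (Fin.last m) = b
    rw [Fin.snoc_last]
  show (if (fun j => if h : j < m + 1 then (Fin.snoc ω b : Fin (m + 1) → Bool) ⟨j, h⟩
      else false) m then _ else _) = _
  rw [hξ, hcongr]
  cases b <;> simp


/-- convergence of L2GD: if each `fᵢ` is differentiable, `L`-smooth and
`μ`-strongly convex with `μ > 0`, `λ ≥ 0`, `0 < p < 1`, `x(λ)` is the minimizer of
`F = f + λψ`, `𝓛 = (1/n) max{L/(1−p), λ/p}`,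
`σ² = (1/n²) Σᵢ [(1/(1−p))‖∇fᵢ(xᵢ(λ))‖² + (λ²/p)‖xᵢ(λ) − x̄(λ)‖²]`, and
`0 < α ≤ 1/(2𝓛)`, then for every `k`, the expectation of `‖x^k − x(λ)‖²` over the
i.i.d. Bernoulli(`p`) coin tosses (a finite weighted sum over all paths
`ω : Fin k → Bool`, each path having probability `∏ⱼ p^{ωⱼ}(1−p)^{1−ωⱼ}`) is at most
`(1 − αμ/n)^k ‖x⁰ − x(λ)‖² + 2nασ²/μ`. -/
theorem stmt15 (n d : ℕ) (hn : 0 < n) (L μ lam p α : ℝ) (hμ : 0 < μ)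
    (hlam : 0 ≤ lam) (hp0 : 0 < p) (hp1 : p < 1)
    (f : Fin n → Vec d → ℝ) (g : Fin n → Vec d → Vec d)
    (hgrad : ∀ i (x : Vec d), HasGradientAt (f i) (g i x) x)
    (hsmooth : ∀ i (x y : Vec d), ‖g i x - g i y‖ ≤ L * ‖x - y‖)
    (hsc : ∀ i, StrongConvexOn Set.univ μ (f i))
    (xlam : Blk n d) (hxlam : ∀ y : Blk n d, FF f lam xlam ≤ FF f lam y)
    (hα0 : 0 < α)
    (hα : α ≤ 1 / (2 * ((n : ℝ)⁻¹ * max (L / (1 - p)) (lam / p))))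
    (x0 : Blk n d) :
    ∀ k : ℕ,
      ∑ ω : Fin k → Bool,
          (∏ j, if ω j then p else 1 - p) *
            ‖l2gdIter g lam p α x0 (fun j => if h : j < k then ω ⟨j, h⟩ else false) k
                - xlam‖ ^ 2 ≤
        (1 - α * μ / n) ^ k * ‖x0 - xlam‖ ^ 2 +
          2 * n * α *
              (((n : ℝ) ^ 2)⁻¹ *
                ∑ i, ((1 / (1 - p)) * ‖g i (xlam i)‖ ^ 2 +
                  (lam ^ 2 / p) * ‖xlam i - blkAvg xlam‖ ^ 2)) / μ := by
  have hnR : (0:ℝ) < n := Nat.cast_pos.mpr hn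
  have hn' : ((n:ℝ)) ≠ 0 := hnR.ne'
  have h1p : (0:ℝ) < 1 - p := by linarith
  rcases Nat.eq_zero_or_pos d with hd | hd
  · -- degenerate case d = 0: every vector is 0
    subst hd
    intro k
    have hz : ∀ v : Vec 0, v = 0 := fun v => PiLp.ext fun i => i.elim0
    have hB : ∀ z z' : Blk n 0, z = z' := fun z z' => PiLp.ext fun i => by
      rw [hz (z i), hz (z' i)]
    have hL1 : ∀ ω : Fin k → Bool,
        ‖l2gdIter g lam p α x0 (fun j => if h : j < k then ω ⟨j, h⟩ else false) k - xlam‖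
          = 0 := by
      intro ω
      rw [hB (l2gdIter g lam p α x0 (fun j => if h : j < k then ω ⟨j, h⟩ else false) k) xlam,
        sub_self, norm_zero]
    have e0 : ‖x0 - xlam‖ = 0 := by rw [hB x0 xlam, sub_self, norm_zero]
    have e1 : ∀ i, ‖g i (xlam i)‖ = 0 := fun i => by rw [hz (g i (xlam i)), norm_zero]
    have e2 : ∀ i, ‖xlam i - blkAvg xlam‖ = 0 := fun i => by
      rw [hz (xlam i), hz (blkAvg xlam), sub_self, norm_zero]
    simp [hL1, e0, e1, e2]
  · -- main case d > 0
    -- μ ≤ L, hence L > 0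
    have hμL : μ ≤ L := by
      set i0 : Fin n := ⟨0, hn⟩
      set e0 : Vec d := EuclideanSpace.single (⟨0, hd⟩ : Fin d) (1:ℝ) with he0def
      have he0 : ‖e0‖ = 1 := by rw [he0def, EuclideanSpace.norm_single, norm_one]
      have s1 := strong_fo (f i0) (g i0) (hgrad i0) μ (hsc i0) 0 e0
      have s2 := strong_fo (f i0) (g i0) (hgrad i0) μ (hsc i0) e0 0
      have hcs : (⟪g i0 e0 - g i0 0, e0⟫ : ℝ) ≤ L := by
        calc (⟪g i0 e0 - g i0 0, e0⟫ : ℝ) ≤ ‖g i0 e0 - g i0 0‖ * ‖e0‖ := real_inner_le_norm _ _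
          _ ≤ (L * ‖e0 - 0‖) * ‖e0‖ :=
              mul_le_mul_of_nonneg_right (hsmooth i0 e0 0) (norm_nonneg e0)
          _ = L := by rw [sub_zero, he0]; ring
      rw [sub_zero, he0] at s1
      rw [zero_sub, norm_neg, he0, inner_neg_right] at s2
      rw [inner_sub_left] at hcs
      nlinarith [s1, s2, hcs]
    have hL : 0 < L := lt_of_lt_of_le hμ hμL
    have h𝓛0 : 0 < (n : ℝ)⁻¹ * max (L / (1 - p)) (lam / p) :=
      mul_pos (by positivity) (lt_of_lt_of_le (div_pos hL h1p) (le_max_left _ _))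
    have hα2 : 2 * α * ((n : ℝ)⁻¹ * max (L / (1 - p)) (lam / p)) ≤ 1 := by
      rw [le_div_iff₀ (by positivity)] at hα
      linarith [hα]
    -- β = α μ / n facts
    have hβpos : 0 < α * μ / (n:ℝ) := by positivity
    have hβle : α * μ / (n:ℝ) ≤ 1 := by
      have hL1 : L ≤ L / (1 - p) := by
        rw [le_div_iff₀ h1p]
        nlinarith [hL, hp0]
      have h1 : μ / (n:ℝ) ≤ (n:ℝ)⁻¹ * (L / (1 - p)) := by
        rw [div_eq_mul_inv, mul_comm]
        exact mul_le_mul_of_nonneg_left (hμL.trans hL1) (by positivity)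
      have h2 : μ / (n:ℝ) ≤ (n : ℝ)⁻¹ * max (L / (1 - p)) (lam / p) :=
        h1.trans (mul_le_mul_of_nonneg_left (le_max_left _ _) (by positivity))
      have h3 := mul_le_mul_of_nonneg_left h2 hα0.le
      have h4 : α * (μ / (n:ℝ)) = α * μ / (n:ℝ) := by ring
      nlinarith [h3, hα2, hα0.le, h𝓛0]
    have h1β : 0 ≤ 1 - α * μ / (n:ℝ) := by linarith
    -- σ²
    set σ2 : ℝ := ((n : ℝ) ^ 2)⁻¹ *
        ∑ i, ((1 / (1 - p)) * ‖g i (xlam i)‖ ^ 2 +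
          (lam ^ 2 / p) * ‖xlam i - blkAvg xlam‖ ^ 2) with hσ2def
    have hσ2nn : 0 ≤ σ2 := by
      rw [hσ2def]
      refine mul_nonneg (by positivity) (Finset.sum_nonneg fun i _ => add_nonneg ?_ ?_)
      · exact mul_nonneg (le_of_lt (div_pos one_pos h1p)) (sq_nonneg _)
      · exact mul_nonneg (div_nonneg (sq_nonneg lam) hp0.le) (sq_nonneg _)
    have hσeq : (lam ^ 2 / p) * ‖gradPsi xlam‖ ^ 2 + (1 / (1 - p)) * ‖gradTot g xlam‖ ^ 2
        = σ2 := by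
      rw [hσ2def, blk_norm_sq, blk_norm_sq]
      have e1 : ∀ i : Fin n, ‖gradPsi xlam i‖ ^ 2
          = ((n:ℝ) ^ 2)⁻¹ * ‖xlam i - blkAvg xlam‖ ^ 2 := by
        intro i
        show ‖(n:ℝ)⁻¹ • (xlam i - blkAvg xlam)‖ ^ 2 = _
        rw [norm_smul, mul_pow, Real.norm_eq_abs, sq_abs, ← inv_pow]
      have e2 : ∀ i : Fin n, ‖gradTot g xlam i‖ ^ 2 = ((n:ℝ) ^ 2)⁻¹ * ‖g i (xlam i)‖ ^ 2 := by
        intro i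
        show ‖(n:ℝ)⁻¹ • (g i (xlam i))‖ ^ 2 = _
        rw [norm_smul, mul_pow, Real.norm_eq_abs, sq_abs, ← inv_pow]
      simp_rw [e1, e2]
      rw [Finset.mul_sum, Finset.mul_sum, Finset.mul_sum, ← Finset.sum_add_distrib]
      refine Finset.sum_congr rfl fun i _ => ?_
      ring
    -- the one-step bound
    have step : ∀ x : Blk n d,
        p * ‖x - α • (p⁻¹ • (lam • gradPsi x)) - xlam‖ ^ 2
          + (1 - p) * ‖x - α • ((1 - p)⁻¹ • gradTot g x) - xlam‖ ^ 2
        ≤ (1 - α * μ / n) * ‖x - xlam‖ ^ 2 + 2 * α ^ 2 * σ2 := by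
      intro x
      have := l2gd_step hn L μ lam p α hμ hlam hp0 hp1 hL f g hgrad hsmooth hsc
        xlam hxlam hα0 hα2 x
      rw [hσeq] at this
      exact this
    -- path weights
    have Wnn : ∀ {m : ℕ} (ω : Fin m → Bool), 0 ≤ ∏ j, if ω j then p else 1 - p := by
      intro m ω
      exact Finset.prod_nonneg fun j _ => by split <;> linarith
    have sum1 : ∀ m : ℕ, ∑ ω : Fin m → Bool, (∏ j, if ω j then p else 1 - p) = 1 := by
      intro m
      induction m with
      | zero => simp
      | succ m ih =>
        rw [sum_snoc_split]
        have h1 : ∀ ω : Fin m → Bool, ∑ b : Bool,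
            (∏ j, if (Fin.snoc ω b : Fin (m + 1) → Bool) j then p else 1 - p)
            = ∏ j, if ω j then p else 1 - p := by
          intro ω
          rw [Fintype.sum_bool, prod_snoc, prod_snoc]
          norm_num
          ring
        simp_rw [h1]
        exact ih
    -- main induction
    have claim : ∀ m : ℕ,
        (∑ ω : Fin m → Bool, (∏ j, if ω j then p else 1 - p) *
            ‖l2gdIter g lam p α x0 (fun j => if h : j < m then ω ⟨j, h⟩ else false) m
              - xlam‖ ^ 2)
        ≤ (1 - α * μ / n) ^ m * ‖x0 - xlam‖ ^ 2 + 2 * α ^ 2 * σ2 / (α * μ / n) := by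
      intro m
      induction m with
      | zero =>
        have hC : 0 ≤ 2 * α ^ 2 * σ2 / (α * μ / n) := by positivity
        have h0 : (∑ ω : Fin 0 → Bool, (∏ j, if ω j then p else 1 - p) *
            ‖l2gdIter g lam p α x0
              (fun j => if h : j < 0 then ω ⟨j, h⟩ else false) 0 - xlam‖ ^ 2)
            = ‖x0 - xlam‖ ^ 2 := by
          simp [l2gdIter]
        rw [h0, pow_zero, one_mul]
        linarith
      | succ m ih =>
        rw [sum_snoc_split]
        have hterm : ∀ ω : Fin m → Bool,
            (∑ b : Bool, (∏ j, if (Fin.snoc ω b : Fin (m + 1) → Bool) j then p else 1 - p) *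
              ‖l2gdIter g lam p α x0
                (fun j => if h : j < m + 1 then (Fin.snoc ω b : Fin (m + 1) → Bool) ⟨j, h⟩
                  else false) (m + 1) - xlam‖ ^ 2)
            ≤ (∏ j, if ω j then p else 1 - p) *
                ((1 - α * μ / n) *
                  ‖l2gdIter g lam p α x0 (fun j => if h : j < m then ω ⟨j, h⟩ else false) m
                    - xlam‖ ^ 2 + 2 * α ^ 2 * σ2) := by
          intro ω
          rw [Fintype.sum_bool, prod_snoc, prod_snoc, iter_snoc, iter_snoc]
          simp only [if_true, if_false, cond_true, cond_false]
          set y := l2gdIter g lam p α x0 (fun j => if h : j < m then ω ⟨j, h⟩ else false) m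
            with hy
          have hs := step y
          have hW := Wnn ω
          calc (∏ j, if ω j then p else 1 - p) * p *
                ‖y - α • (p⁻¹ • (lam • gradPsi y)) - xlam‖ ^ 2
              + (∏ j, if ω j then p else 1 - p) * (1 - p) *
                ‖y - α • ((1 - p)⁻¹ • gradTot g y) - xlam‖ ^ 2
              = (∏ j, if ω j then p else 1 - p) *
                (p * ‖y - α • (p⁻¹ • (lam • gradPsi y)) - xlam‖ ^ 2
                  + (1 - p) * ‖y - α • ((1 - p)⁻¹ • gradTot g y) - xlam‖ ^ 2) := by ring
            _ ≤ (∏ j, if ω j then p else 1 - p) *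
                ((1 - α * μ / n) * ‖y - xlam‖ ^ 2 + 2 * α ^ 2 * σ2) :=
                mul_le_mul_of_nonneg_left hs hW
        calc (∑ ω : Fin m → Bool, ∑ b : Bool,
              (∏ j, if (Fin.snoc ω b : Fin (m + 1) → Bool) j then p else 1 - p) *
              ‖l2gdIter g lam p α x0
                (fun j => if h : j < m + 1 then (Fin.snoc ω b : Fin (m + 1) → Bool) ⟨j, h⟩
                  else false) (m + 1) - xlam‖ ^ 2)
            ≤ ∑ ω : Fin m → Bool, (∏ j, if ω j then p else 1 - p) *
                ((1 - α * μ / n) *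
                  ‖l2gdIter g lam p α x0 (fun j => if h : j < m then ω ⟨j, h⟩ else false) m
                    - xlam‖ ^ 2 + 2 * α ^ 2 * σ2) :=
              Finset.sum_le_sum fun ω _ => hterm ω
          _ = (1 - α * μ / n) * (∑ ω : Fin m → Bool, (∏ j, if ω j then p else 1 - p) *
                ‖l2gdIter g lam p α x0 (fun j => if h : j < m then ω ⟨j, h⟩ else false) m
                  - xlam‖ ^ 2) + 2 * α ^ 2 * σ2 := by
              have he : ∀ ω : Fin m → Bool, (∏ j, if ω j then p else 1 - p) *
                  ((1 - α * μ / n) *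
                    ‖l2gdIter g lam p α x0 (fun j => if h : j < m then ω ⟨j, h⟩ else false) m
                      - xlam‖ ^ 2 + 2 * α ^ 2 * σ2)
                  = (1 - α * μ / n) * ((∏ j, if ω j then p else 1 - p) *
                      ‖l2gdIter g lam p α x0
                        (fun j => if h : j < m then ω ⟨j, h⟩ else false) m - xlam‖ ^ 2)
                    + 2 * α ^ 2 * σ2 * (∏ j, if ω j then p else 1 - p) := fun ω => by ring
              simp_rw [he]
              rw [Finset.sum_add_distrib, ← Finset.mul_sum, ← Finset.mul_sum, sum1 m, mul_one]
          _ ≤ (1 - α * μ / n) * ((1 - α * μ / n) ^ m * ‖x0 - xlam‖ ^ 2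
                + 2 * α ^ 2 * σ2 / (α * μ / n)) + 2 * α ^ 2 * σ2 :=
              add_le_add_left (mul_le_mul_of_nonneg_left ih h1β) _
          _ = (1 - α * μ / n) ^ (m + 1) * ‖x0 - xlam‖ ^ 2
                + ((1 - α * μ / n) * (2 * α ^ 2 * σ2 / (α * μ / n)) + 2 * α ^ 2 * σ2) := by
              ring
          _ = (1 - α * μ / n) ^ (m + 1) * ‖x0 - xlam‖ ^ 2 + 2 * α ^ 2 * σ2 / (α * μ / n) := by
              congr 1
              field_simp
              ring
    intro k
    refine (claim k).trans (le_of_eq ?_)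
    congr 1
    field_simp [hα0.ne', hμ.ne', hn']
end
end

section
/- Let L > 0, λ > 0 and μ > 0, and for p ∈ (0,1) define M(p) = max{L/(1−p), λ/p} and C(p) = p(1−p)·M(p) = max{pL, (1−p)λ}. Then p* = λ/(L+λ) minimizes both M(p) and C(p) over p ∈ (0,1); moreover M(p*) = L + λ and C(p*) = λL/(λ+L). Consequently, running L2GD with p = p* gives iteration count 2(L+λ)/μ · log(1/ε) and expected communication count (2λ/(λ+L))·(L/μ)·log(1/ε) to reach accuracy ε in the sense of achieving E‖x^k − x(λ)‖² ≤ ε‖x^0 − x(λ)‖² + 2nασ²/μ with α = 1/(2𝓛), 𝓛 = M(p)/n. -/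
open scoped BigOperators

/-- for `L, λ, μ > 0` and `M(p) = max{L/(1−p), λ/p}`,
`C(p) = p(1−p)M(p) = max{pL, (1−p)λ}` on `(0,1)`, the choice `p* = λ/(L+λ)`
minimizes both `M` and `C` over `(0,1)`, with `M(p*) = L + λ` and
`C(p*) = λL/(λ+L)`. Consequently, L2GD run with `p = p*`, stepsize `α = 1/(2𝓛)`
where `𝓛 = M(p)/n`, and iteration count `(2n𝓛/μ)·log(1/ε)` uses
`2(L+λ)/μ · log(1/ε)` iterations and `(2λ/(λ+L))·(L/μ)·log(1/ε)` expected
communications (the expected communications in `k` iterations being `p(1−p)k`). -/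
theorem stmt17 (L lam μ ε : ℝ) (n : ℕ) (hL : 0 < L) (hlam : 0 < lam) (hμ : 0 < μ)
    (hn : 1 ≤ n) (hε : 0 < ε) :
    let M : ℝ → ℝ := fun p => max (L / (1 - p)) (lam / p)
    let C : ℝ → ℝ := fun p => p * (1 - p) * M p
    let pstar : ℝ := lam / (L + lam)
    pstar ∈ Set.Ioo (0 : ℝ) 1 ∧
      (∀ p ∈ Set.Ioo (0 : ℝ) 1, C p = max (p * L) ((1 - p) * lam)) ∧
      (∀ p ∈ Set.Ioo (0 : ℝ) 1, M pstar ≤ M p) ∧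
      (∀ p ∈ Set.Ioo (0 : ℝ) 1, C pstar ≤ C p) ∧
      M pstar = L + lam ∧
      C pstar = lam * L / (lam + L) ∧
      (2 * (n : ℝ) * ((n : ℝ)⁻¹ * M pstar) / μ) * Real.log (1 / ε) =
        (2 * (L + lam) / μ) * Real.log (1 / ε) ∧
      pstar * (1 - pstar) *
          ((2 * (n : ℝ) * ((n : ℝ)⁻¹ * M pstar) / μ) * Real.log (1 / ε)) =
        (2 * lam / (lam + L)) * (L / μ) * Real.log (1 / ε) := by
  intro M C pstar
  have hLlam : 0 < L + lam := by linarith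
  have hps : 0 < pstar := div_pos hlam hLlam
  have hps1 : pstar < 1 := by
    rw [div_lt_one hLlam]; linarith
  have hCeq : ∀ p ∈ Set.Ioo (0:ℝ) 1, C p = max (p * L) ((1 - p) * lam) := by
    intro p hp
    obtain ⟨hp0, hp1⟩ := hp
    have h1p : 0 < 1 - p := by linarith
    show p * (1 - p) * max (L / (1 - p)) (lam / p) = _
    rw [mul_max_of_nonneg _ _ (by positivity : (0:ℝ) ≤ p * (1 - p))]
    congr 1 <;> field_simp <;> ring
  have hMps : M pstar = L + lam := by
    show max (L / (1 - pstar)) (lam / pstar) = L + lam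
    have h1 : 1 - pstar = L / (L + lam) := by
      rw [eq_div_iff hLlam.ne', sub_mul, one_mul]
      show L + lam - lam / (L + lam) * (L + lam) = L
      rw [div_mul_cancel₀ _ hLlam.ne']; ring
    have e1 : L / (1 - pstar) = L + lam := by
      rw [h1]; field_simp
    have e2 : lam / pstar = L + lam := by
      show lam / (lam / (L + lam)) = L + lam
      field_simp
    rw [e1, e2, max_self]
  have hCps : C pstar = lam * L / (lam + L) := by
    show pstar * (1 - pstar) * M pstar = _
    rw [hMps]
    show lam / (L + lam) * (1 - lam / (L + lam)) * (L + lam) = _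
    field_simp
    ring
  refine ⟨⟨hps, hps1⟩, hCeq, ?_, ?_, hMps, hCps, ?_, ?_⟩
  · intro p hp
    obtain ⟨hp0, hp1⟩ := hp
    have h1p : 0 < 1 - p := by linarith
    rw [hMps]
    rcases le_total p pstar with h | h
    · refine le_trans ?_ (le_max_right _ _)
      rw [le_div_iff₀ hp0]
      have : p ≤ lam / (L + lam) := h
      rw [le_div_iff₀ hLlam] at this
      nlinarith
    · refine le_trans ?_ (le_max_left _ _)
      rw [le_div_iff₀ h1p]
      have : lam / (L + lam) ≤ p := h
      rw [div_le_iff₀ hLlam] at this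
      nlinarith
  · intro p hp
    have := hCeq p hp
    obtain ⟨hp0, hp1⟩ := hp
    rw [this, hCps]
    rcases le_total pstar p with h | h
    · refine le_trans ?_ (le_max_left _ _)
      have : lam / (L + lam) ≤ p := h
      rw [div_le_iff₀ hLlam] at this
      rw [div_le_iff₀ (by linarith : (0:ℝ) < lam + L)]
      nlinarith
    · refine le_trans ?_ (le_max_right _ _)
      have : p ≤ lam / (L + lam) := h
      rw [le_div_iff₀ hLlam] at this
      rw [div_le_iff₀ (by linarith : (0:ℝ) < lam + L)]
      nlinarith
  · rw [hMps]
    have hn0 : (n:ℝ) ≠ 0 := by positivity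
    field_simp
  · rw [hMps]
    have hn0 : (n:ℝ) ≠ 0 := by positivity
    have h1 : 1 - pstar = L / (L + lam) := by
      rw [eq_div_iff hLlam.ne', sub_mul, one_mul]
      show L + lam - lam / (L + lam) * (L + lam) = L
      rw [div_mul_cancel₀ _ hLlam.ne']; ring
    rw [h1]
    show lam / (L + lam) * (L / (L + lam)) * _ = _
    field_simp
    ring
end
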